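/- Let φ : (G′,g′) → (G,g) be an unramified finite harmonic morphism of weighted graphs and let S ⊆ E(G), with S′ = { e′ ∈ E(G′) : φ(e′) ∈ S }. Then: (a) every connected component F′ of the subgraph [S′] maps onto the connected component F of [S] containing its image, and the number Σ{ d_φ(u′) : u′ ∈ V(F′), φ(u′) = u } is independent of the choice of vertex u ∈ V(F); (b) the contraction φ_S : G′/S′ → G/S, defined to agree with c_S∘φ and with the degrees of φ on all uncontracted elements and to send each contracted vertex [F′] to the corresponding contracted vertex [F] with the degree from (a), is again an unramified finite harmonic morphism of weighted graphs. -/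

import Mathlib

namespace TropDR

open Finset

/-- `Finset.filter` with classical decidability. -/
noncomputable def cfilter {α : Type*} (p : α → Prop) (s : Finset α) : Finset α :=
  @Finset.filter α p (Classical.decPred p) s

/-- A graph with legs: a finite set `X` together with an idempotent root map `rt`
and an involution `inv` fixing every root vertex. -/
structure PGraph where
  X : Type
  [fintypeX : Fintype X]
  [decEqX : DecidableEq X]
  rt : X → X
  inv : X → X
  rt_idem : ∀ x, rt (rt x) = rt x
  inv_invol : ∀ x, inv (inv x) = x
  inv_fix_rt : ∀ x, inv (rt x) = rt x

attribute [instance] PGraph.fintypeX PGraph.decEqX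

namespace PGraph

variable (G : PGraph)

/-- Vertices are the fixed points (= the image) of the root map. -/
def IsVertex (x : G.X) : Prop := G.rt x = x

/-- Half-edges are the non-vertices. -/
def IsHalf (x : G.X) : Prop := G.rt x ≠ x

/-- Legs are the `inv`-fixed half-edges. -/
def IsLeg (x : G.X) : Prop := G.IsHalf x ∧ G.inv x = x

/-- Halves of genuine edges: half-edges moved by the involution. -/
def IsEdgeHalf (x : G.X) : Prop := G.IsHalf x ∧ G.inv x ≠ x

noncomputable def vertexSet : Finset G.X := cfilter (fun x => G.IsVertex x) Finset.univ

noncomputable def legSet : Finset G.X := cfilter (fun x => G.IsLeg x) Finset.univ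

noncomputable def edgeHalfSet : Finset G.X := cfilter (fun x => G.IsEdgeHalf x) Finset.univ

/-- Tangent directions at a vertex `v`: half-edges rooted at `v`. -/
noncomputable def tangents (v : G.X) : Finset G.X :=
  cfilter (fun h => G.IsHalf h ∧ G.rt h = v) Finset.univ

noncomputable def valence (v : G.X) : ℕ := (G.tangents v).card

/-- The number of edges: half the number of edge half-edges. -/
noncomputable def numEdges : ℕ := G.edgeHalfSet.card / 2

noncomputable def numLegs : ℕ := G.legSet.card

noncomputable def numVertices : ℕ := G.vertexSet.card

/-- Connectedness: the equivalence relation generated by `x ∼ rt x` and `x ∼ inv x`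
has a single class (and `X` is nonempty). -/
def Connected : Prop :=
  Nonempty G.X ∧ ∀ x y : G.X, Relation.EqvGen (fun a b => G.rt a = b ∨ G.inv a = b) x y

/-- A subgraph: a subset of `X` closed under the root map and the involution. -/
def IsSubgraph (F : Finset G.X) : Prop :=
  (∀ x ∈ F, G.rt x ∈ F) ∧ (∀ x ∈ F, G.inv x ∈ F)

/-- Valency of `v` inside a subgraph `F`. -/
noncomputable def valIn (F : Finset G.X) (v : G.X) : ℕ := (G.tangents v ∩ F).card

end PGraph

/-- A morphism of graphs: commutes with the root maps and involutions,
and maps no edge into a leg. -/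
structure GraphHom (G' G : PGraph) where
  toFun : G'.X → G.X
  map_rt : ∀ x, toFun (G'.rt x) = G.rt (toFun x)
  map_inv : ∀ x, toFun (G'.inv x) = G.inv (toFun x)
  edge_not_leg : ∀ h, G'.IsEdgeHalf h → ¬ G.IsLeg (toFun h)

/-- A harmonic morphism of graphs: a graph morphism together with a degree function. -/
structure HarmonicHom (G' G : PGraph) extends GraphHom G' G where
  deg : G'.X → ℕ
  deg_edge : ∀ h, G'.IsEdgeHalf h → deg (G'.inv h) = deg h
  deg_zero_iff : ∀ h, G'.IsHalf h → (deg h = 0 ↔ G.IsVertex (toFun h))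
  harmonic : ∀ v', G'.IsVertex v' → ∀ h, G.IsHalf h → G.rt h = toFun v' →
    deg v' = ∑ h' ∈ cfilter (fun h' => toFun h' = h) (G'.tangents v'), deg h'

namespace HarmonicHom

variable {G' G : PGraph} (φ : HarmonicHom G' G)

/-- A harmonic morphism is finite if it has positive degree on every half-edge. -/
def Finite : Prop := ∀ h, G'.IsHalf h → 0 < φ.deg h

/-- The sum of the degrees over the vertex fiber of `v`. -/
noncomputable def vertexFiberDeg (v : G.X) : ℕ :=
  ∑ v' ∈ cfilter (fun v' => φ.toFun v' = v) G'.vertexSet, φ.deg v'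

end HarmonicHom

/-- A weighted graph: a graph together with a genus function on (all elements;
only the values at vertices are relevant). -/
structure WGraph extends PGraph where
  gw : X → ℕ

namespace WGraph

variable (G : WGraph)

/-- The genus of a (connected) weighted graph. -/
noncomputable def genus : ℤ :=
  (G.toPGraph.numEdges : ℤ) - (G.toPGraph.numVertices : ℤ) + 1 +
    ∑ v ∈ G.toPGraph.vertexSet, (G.gw v : ℤ)

/-- The Euler characteristic of a vertex. -/
noncomputable def chiV (v : G.X) : ℤ :=
  2 - 2 * (G.gw v : ℤ) - (G.toPGraph.valence v : ℤ)

/-- The Euler characteristic of a (connected) weighted graph. -/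
noncomputable def chi : ℤ := 2 - 2 * G.genus - (G.toPGraph.numLegs : ℤ)

end WGraph

/-- The ramification degree of a (finite) harmonic morphism of weighted graphs at `v'`. -/
noncomputable def ram {G' G : WGraph} (φ : HarmonicHom G'.toPGraph G.toPGraph) (v' : G'.X) : ℤ :=
  (φ.deg v' : ℤ) * G.chiV (φ.toFun v') - G'.chiV v'

def Unramified {G' G : WGraph} (φ : HarmonicHom G'.toPGraph G.toPGraph) : Prop :=
  ∀ v', G'.toPGraph.IsVertex v' → ram φ v' = 0

def Effective {G' G : WGraph} (φ : HarmonicHom G'.toPGraph G.toPGraph) : Prop :=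
  ∀ v', G'.toPGraph.IsVertex v' → 0 ≤ ram φ v'

theorem mem_cfilter {α : Type*} {p : α → Prop} {s : Finset α} {x : α} :
    x ∈ cfilter p s ↔ x ∈ s ∧ p x :=
  @Finset.mem_filter α p (Classical.decPred p) s x

/-- A finset of half-edges encodes a set of edges if it consists of edge half-edges and
is closed under the involution. -/
def IsEdgeSet (G : PGraph) (SH : Finset G.X) : Prop :=
  ∀ h ∈ SH, G.IsEdgeHalf h ∧ G.inv h ∈ SH

/-- The underlying set `X([S])` of the subgraph generated by a set `SH` of (half-)edges:
the half-edges in `SH` together with their root vertices. -/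
noncomputable def sgSet (G : PGraph) (SH : Finset G.X) : Finset G.X :=
  SH ∪ SH.image G.rt

/-- One step of the relation identifying the elements of each connected component of
the subgraph `[S]` generated by `SH`. -/
def contrRel (G : PGraph) (SH : Finset G.X) (a b : G.X) : Prop :=
  a ∈ sgSet G SH ∧ b ∈ sgSet G SH ∧ (G.rt a = b ∨ G.inv a = b)

/-- The setoid on `X(G)` collapsing every connected component of `[S]` to a point. -/
noncomputable def contrSetoid (G : PGraph) (SH : Finset G.X) : Setoid G.X :=
  ⟨Relation.EqvGen (contrRel G SH), Relation.EqvGen.is_equivalence _⟩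

theorem mem_sgSet_rt (G : PGraph) (SH : Finset G.X) {x : G.X} (hx : x ∈ sgSet G SH) :
    G.rt x ∈ sgSet G SH := by
  rcases Finset.mem_union.mp hx with h | h
  · exact Finset.mem_union.mpr (Or.inr (Finset.mem_image_of_mem _ h))
  · rcases Finset.mem_image.mp h with ⟨y, hy, rfl⟩
    rw [G.rt_idem]
    exact Finset.mem_union.mpr (Or.inr (Finset.mem_image.mpr ⟨y, hy, rfl⟩))

theorem mem_sgSet_inv (G : PGraph) (SH : Finset G.X) (hSH : IsEdgeSet G SH) {x : G.X}
    (hx : x ∈ sgSet G SH) : G.inv x ∈ sgSet G SH := by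
  rcases Finset.mem_union.mp hx with h | h
  · exact Finset.mem_union.mpr (Or.inl (hSH x h).2)
  · rcases Finset.mem_image.mp h with ⟨y, hy, rfl⟩
    rw [G.inv_fix_rt]
    exact Finset.mem_union.mpr (Or.inr (Finset.mem_image.mpr ⟨y, hy, rfl⟩))

theorem eqv_rt (G : PGraph) (SH : Finset G.X) {x : G.X} (hx : x ∈ sgSet G SH) :
    Relation.EqvGen (contrRel G SH) x (G.rt x) :=
  Relation.EqvGen.rel _ _ ⟨hx, mem_sgSet_rt G SH hx, Or.inl rfl⟩

theorem eqv_inv (G : PGraph) (SH : Finset G.X) (hSH : IsEdgeSet G SH) {x : G.X}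
    (hx : x ∈ sgSet G SH) :
    Relation.EqvGen (contrRel G SH) x (G.inv x) :=
  Relation.EqvGen.rel _ _ ⟨hx, mem_sgSet_inv G SH hSH hx, Or.inr rfl⟩

theorem rt_respects (G : PGraph) (SH : Finset G.X) :
    ∀ a b, Relation.EqvGen (contrRel G SH) a b →
      Relation.EqvGen (contrRel G SH) (G.rt a) (G.rt b) := by
  intro a b h
  induction h with
  | rel a b hab =>
      exact Relation.EqvGen.trans _ _ _
        (Relation.EqvGen.trans _ _ _ (Relation.EqvGen.symm _ _ (eqv_rt G SH hab.1))
          (Relation.EqvGen.rel _ _ hab))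
        (eqv_rt G SH hab.2.1)
  | refl a => exact Relation.EqvGen.refl _
  | symm a b _ ih => exact Relation.EqvGen.symm _ _ ih
  | trans a b c _ _ ih1 ih2 => exact Relation.EqvGen.trans _ _ _ ih1 ih2

theorem inv_respects (G : PGraph) (SH : Finset G.X) (hSH : IsEdgeSet G SH) :
    ∀ a b, Relation.EqvGen (contrRel G SH) a b →
      Relation.EqvGen (contrRel G SH) (G.inv a) (G.inv b) := by
  intro a b h
  induction h with
  | rel a b hab =>
      exact Relation.EqvGen.trans _ _ _
        (Relation.EqvGen.trans _ _ _ (Relation.EqvGen.symm _ _ (eqv_inv G SH hSH hab.1))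
          (Relation.EqvGen.rel _ _ hab))
        (eqv_inv G SH hSH hab.2.1)
  | refl a => exact Relation.EqvGen.refl _
  | symm a b _ ih => exact Relation.EqvGen.symm _ _ ih
  | trans a b c _ _ ih1 ih2 => exact Relation.EqvGen.trans _ _ _ ih1 ih2

theorem eqv_cases (G : PGraph) (SH : Finset G.X) :
    ∀ a b, Relation.EqvGen (contrRel G SH) a b →
      a = b ∨ (a ∈ sgSet G SH ∧ b ∈ sgSet G SH) := by
  intro a b h
  induction h with
  | rel a b hab => exact Or.inr ⟨hab.1, hab.2.1⟩
  | refl a => exact Or.inl rfl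
  | symm a b _ ih =>
      rcases ih with h' | h'
      · exact Or.inl h'.symm
      · exact Or.inr ⟨h'.2, h'.1⟩
  | trans a b c _ _ ih1 ih2 =>
      rcases ih1 with h1 | h1
      · rcases ih2 with h2 | h2
        · exact Or.inl (h1.trans h2)
        · exact Or.inr ⟨h1 ▸ h2.1, h2.2⟩
      · rcases ih2 with h2 | h2
        · exact Or.inr ⟨h1.1, h2 ▸ h1.2⟩
        · exact Or.inr ⟨h1.1, h2.2⟩

/-- The contraction `G/S` of `G` along the set of edges encoded by the inv-closed set `SH`
of half-edges: the quotient collapsing each connected component of `[S]` to a vertex. -/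
noncomputable def contract (G : PGraph) (SH : Finset G.X) (hSH : IsEdgeSet G SH) :
    PGraph where
  X := Quotient (contrSetoid G SH)
  fintypeX := @Quotient.fintype G.X _ (contrSetoid G SH) (fun _ _ => Classical.dec _)
  decEqX := fun _ _ => Classical.dec _
  rt := Quotient.lift (fun x => Quotient.mk (contrSetoid G SH) (G.rt x))
    (fun a b hab => Quotient.sound (rt_respects G SH a b hab))
  inv := Quotient.lift (fun x => Quotient.mk (contrSetoid G SH) (G.inv x))
    (fun a b hab => Quotient.sound (inv_respects G SH hSH a b hab))
  rt_idem := by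
    intro q
    refine Quotient.inductionOn q (fun a => ?_)
    simpa using congrArg (Quotient.mk (contrSetoid G SH)) (G.rt_idem a)
  inv_invol := by
    intro q
    refine Quotient.inductionOn q (fun a => ?_)
    simpa using congrArg (Quotient.mk (contrSetoid G SH)) (G.inv_invol a)
  inv_fix_rt := by
    intro q
    refine Quotient.inductionOn q (fun a => ?_)
    simpa using congrArg (Quotient.mk (contrSetoid G SH)) (G.inv_fix_rt a)

/-- The connected component (inside `[S]`) of `x`, as a finset of `X(G)`. -/
noncomputable def componentSet (G : PGraph) (SH : Finset G.X) (x : G.X) : Finset G.X :=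
  cfilter (fun y => (contrSetoid G SH).r x y) Finset.univ

/-- Genus of the subgraph spanned by a finset `F` (all of whose half-edges are halves of
edges with both halves in `F`). -/
noncomputable def finsetGenus (G : WGraph) (F : Finset G.X) : ℤ :=
  (((cfilter (fun x => G.toPGraph.IsEdgeHalf x) F).card / 2 : ℕ) : ℤ) -
    ((cfilter (fun x => G.toPGraph.IsVertex x) F).card : ℤ) + 1 +
    ∑ v ∈ cfilter (fun x => G.toPGraph.IsVertex x) F, (G.gw v : ℤ)

theorem componentSet_eq_of_eqv (G : PGraph) (SH : Finset G.X) {a b : G.X}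
    (hab : Relation.EqvGen (contrRel G SH) a b) :
    componentSet G SH a = componentSet G SH b := by
  apply Finset.ext
  intro y
  simp only [componentSet]
  rw [mem_cfilter, mem_cfilter]
  constructor
  · rintro ⟨-, h⟩
    exact ⟨Finset.mem_univ y, Relation.EqvGen.trans _ _ _ (Relation.EqvGen.symm _ _ hab) h⟩
  · rintro ⟨-, h⟩
    exact ⟨Finset.mem_univ y, Relation.EqvGen.trans _ _ _ hab h⟩

/-- The weighted contraction `(G,g)/S`: each contracted component becomes a vertex whose
weight is the genus of that component. -/
noncomputable def wcontract (G : WGraph) (SH : Finset G.X)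
    (hSH : IsEdgeSet G.toPGraph SH) : WGraph where
  toPGraph := contract G.toPGraph SH hSH
  gw := Quotient.lift
    (fun x => if x ∈ sgSet G.toPGraph SH then
        (finsetGenus G (componentSet G.toPGraph SH x)).toNat
      else G.gw x)
    (by
      intro a b hab
      rcases eqv_cases G.toPGraph SH a b hab with rfl | ⟨ha, hb⟩
      · rfl
      · simp only [ha, hb, if_pos]
        rw [componentSet_eq_of_eqv G.toPGraph SH hab])

/-- The set `S' = φ⁻¹(S)` of half-edges of the source lying over the half-edges in `SH`. -/
noncomputable def preimHalves {G' G : PGraph} (φ : HarmonicHom G' G) (SH : Finset G.X) :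
    Finset G'.X :=
  cfilter (fun h' => G'.IsEdgeHalf h' ∧ φ.toFun h' ∈ SH) Finset.univ

theorem isEdgeHalf_inv (G : PGraph) {h : G.X} (hE : G.IsEdgeHalf h) :
    G.IsEdgeHalf (G.inv h) := by
  constructor
  · intro hc
    have h1 : G.inv (G.inv h) = G.inv h := by
      conv_lhs => rw [← hc]
      rw [G.inv_fix_rt, hc]
    rw [G.inv_invol] at h1
    exact hE.2 h1.symm
  · intro hc
    rw [G.inv_invol] at hc
    exact hE.2 hc.symm

theorem preimHalves_isEdgeSet {G' G : PGraph} (φ : HarmonicHom G' G) (SH : Finset G.X)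
    (hSH : IsEdgeSet G SH) : IsEdgeSet G' (preimHalves φ SH) := by
  intro h' hh'
  rcases mem_cfilter.mp hh' with ⟨-, hE, hmem⟩
  refine ⟨hE, mem_cfilter.mpr ⟨Finset.mem_univ _, isEdgeHalf_inv G' hE, ?_⟩⟩
  rw [φ.map_inv]
  exact (hSH _ hmem).2
/-- `ψS` is the contraction of the harmonic morphism `ψ` along `SH`: it agrees with
`c_S ∘ ψ` on underlying sets, has the degrees of `ψ` on all uncontracted elements, and on
each contracted vertex `[F']` its degree is `Σ { d_ψ(u') : u' ∈ V(F'), ψ(u') = u }` for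
any fixed vertex `u` of the corresponding component `F` of `[S]`. -/
def IsContractionHom {K' K : WGraph} (ψ : HarmonicHom K'.toPGraph K.toPGraph)
    (SH : Finset K.X) (hSH : IsEdgeSet K.toPGraph SH)
    (SH' : Finset K'.X) (hSH' : IsEdgeSet K'.toPGraph SH')
    (ψS : HarmonicHom (wcontract K' SH' hSH').toPGraph (wcontract K SH hSH).toPGraph) :
    Prop :=
  (∀ x : K'.X,
      ψS.toFun (Quotient.mk (contrSetoid K'.toPGraph SH') x) =
        Quotient.mk (contrSetoid K.toPGraph SH) (ψ.toFun x)) ∧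
  (∀ x : K'.X, x ∉ sgSet K'.toPGraph SH' →
      ψS.deg (Quotient.mk (contrSetoid K'.toPGraph SH') x) = ψ.deg x) ∧
  (∀ x : K'.X, x ∈ sgSet K'.toPGraph SH' → ∀ u : K.X, K.toPGraph.IsVertex u →
      (contrSetoid K.toPGraph SH).r u (ψ.toFun x) →
      ψS.deg (Quotient.mk (contrSetoid K'.toPGraph SH') x) =
        ∑ u' ∈ cfilter (fun u' => K'.toPGraph.IsVertex u' ∧
            (contrSetoid K'.toPGraph SH').r u' x ∧ ψ.toFun u' = u) Finset.univ,
          ψ.deg u')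


section Aux

variable {K : PGraph} {TH : Finset K.X}

theorem mem_TH_isEdgeHalf (hTH : IsEdgeSet K TH) {h : K.X} (hh : h ∈ TH) :
    K.IsEdgeHalf h := (hTH h hh).1

theorem half_mem_sgSet_iff {h : K.X} (hh : K.IsHalf h) :
    h ∈ sgSet K TH ↔ h ∈ TH := by
  constructor
  · intro hmem
    rcases Finset.mem_union.mp hmem with h1 | h1
    · exact h1
    · rcases Finset.mem_image.mp h1 with ⟨y, hy, rfl⟩
      exact absurd (K.rt_idem y) hh
  · intro hmem
    exact Finset.mem_union.mpr (Or.inl hmem)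

theorem vertex_mem_sgSet (hTH : IsEdgeSet K TH) {v : K.X} (hv : K.IsVertex v)
    (hmem : v ∈ sgSet K TH) : ∃ h ∈ TH, K.rt h = v := by
  rcases Finset.mem_union.mp hmem with h1 | h1
  · exact absurd hv (mem_TH_isEdgeHalf hTH h1).1
  · rcases Finset.mem_image.mp h1 with ⟨y, hy, rfl⟩
    exact ⟨y, hy, rfl⟩

theorem mk_eq_mk_iff {a b : K.X} :
    Quotient.mk (contrSetoid K TH) a = Quotient.mk (contrSetoid K TH) b ↔
      Relation.EqvGen (contrRel K TH) a b :=
  ⟨Quotient.exact, fun h => @Quotient.sound _ (contrSetoid K TH) a b h⟩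

theorem eq_of_mk_eq {a b : K.X} (ha : a ∉ sgSet K TH)
    (h : Quotient.mk (contrSetoid K TH) a = Quotient.mk (contrSetoid K TH) b) : a = b := by
  rcases eqv_cases K TH a b (mk_eq_mk_iff.mp h) with h1 | h1
  · exact h1
  · exact absurd h1.1 ha

theorem contract_rt_mk (hTH : IsEdgeSet K TH) (a : K.X) :
    (contract K TH hTH).rt (Quotient.mk (contrSetoid K TH) a) =
      Quotient.mk (contrSetoid K TH) (K.rt a) := rfl

theorem contract_inv_mk (hTH : IsEdgeSet K TH) (a : K.X) :
    (contract K TH hTH).inv (Quotient.mk (contrSetoid K TH) a) =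
      Quotient.mk (contrSetoid K TH) (K.inv a) := rfl

theorem contract_isVertex_iff (hTH : IsEdgeSet K TH) {a : K.X} :
    (contract K TH hTH).IsVertex (Quotient.mk (contrSetoid K TH) a) ↔
      a ∈ sgSet K TH ∨ K.IsVertex a := by
  show Quotient.mk (contrSetoid K TH) (K.rt a) = Quotient.mk (contrSetoid K TH) a ↔ _
  rw [mk_eq_mk_iff]
  constructor
  · intro h
    rcases eqv_cases K TH _ _ h with h1 | h1
    · exact Or.inr h1
    · exact Or.inl h1.2
  · rintro (h | h)
    · exact Relation.EqvGen.symm _ _ (eqv_rt K TH h)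
    · rw [h]
      exact Relation.EqvGen.refl _

theorem contract_isHalf_iff (hTH : IsEdgeSet K TH) {a : K.X} :
    (contract K TH hTH).IsHalf (Quotient.mk (contrSetoid K TH) a) ↔
      a ∉ sgSet K TH ∧ K.IsHalf a := by
  unfold PGraph.IsHalf
  rw [show ((contract K TH hTH).rt (Quotient.mk (contrSetoid K TH) a) ≠
      Quotient.mk (contrSetoid K TH) a) ↔
      ¬ (contract K TH hTH).IsVertex (Quotient.mk (contrSetoid K TH) a) from Iff.rfl,
    contract_isVertex_iff hTH]
  tauto

theorem eqv_of_mem_of_eqv {a b : K.X} (ha : a ∈ sgSet K TH)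
    (h : Relation.EqvGen (contrRel K TH) a b) : b ∈ sgSet K TH := by
  rcases eqv_cases K TH a b h with rfl | h1
  · exact ha
  · exact h1.2

theorem tangent_not_mem_sgSet {v k : K.X} (hv : v ∉ sgSet K TH) (hk : K.IsHalf k)
    (hrt : K.rt k = v) : k ∉ sgSet K TH := by
  intro hmem
  rw [half_mem_sgSet_iff hk] at hmem
  exact hv (hrt ▸ mem_sgSet_rt K TH (Finset.mem_union.mpr (Or.inl hmem)))

noncomputable instance quotDecEq (K : PGraph) (TH : Finset K.X) :
    DecidableEq (Quotient (contrSetoid K TH)) :=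
  fun _ _ => Classical.dec _

theorem contract_tangents_of_not_mem (hTH : IsEdgeSet K TH) {v : K.X}
    (hv : v ∉ sgSet K TH) :
    (contract K TH hTH).tangents (Quotient.mk (contrSetoid K TH) v) =
      (K.tangents v).image (Quotient.mk (contrSetoid K TH)) := by
  apply Finset.ext
  intro q
  refine Quotient.inductionOn q (fun k => ?_)
  simp only [PGraph.tangents, mem_cfilter, Finset.mem_univ, true_and, Finset.mem_image]
  constructor
  · intro hq
    obtain ⟨-, hhalf, hrt⟩ := mem_cfilter.mp hq
    rw [contract_isHalf_iff hTH] at hhalf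
    rw [contract_rt_mk] at hrt
    have : K.rt k = v := (eq_of_mk_eq hv (hrt.symm)).symm
    exact Finset.mem_image.mpr ⟨k, mem_cfilter.mpr ⟨Finset.mem_univ _, hhalf.2, this⟩, rfl⟩
  · intro hq
    obtain ⟨k₂, hk, hq⟩ := Finset.mem_image.mp hq
    obtain ⟨-, hhalf, hrt⟩ := mem_cfilter.mp hk
    have hk₂n : k₂ ∉ sgSet K TH := tangent_not_mem_sgSet hv hhalf hrt
    refine mem_cfilter.mpr ⟨Finset.mem_univ _, ?_, ?_⟩
    · rw [← hq, contract_isHalf_iff hTH]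
      exact ⟨hk₂n, hhalf⟩
    · rw [← hq, contract_rt_mk, hrt]

theorem contract_tangents_of_mem (hTH : IsEdgeSet K TH) {x : K.X}
    (hx : x ∈ sgSet K TH) :
    (contract K TH hTH).tangents (Quotient.mk (contrSetoid K TH) x) =
      (cfilter (fun k => K.IsHalf k ∧ k ∉ TH ∧
        Relation.EqvGen (contrRel K TH) (K.rt k) x) Finset.univ).image
        (Quotient.mk (contrSetoid K TH)) := by
  apply Finset.ext
  intro q
  refine Quotient.inductionOn q (fun k => ?_)
  simp only [PGraph.tangents, mem_cfilter, Finset.mem_univ, true_and, Finset.mem_image]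
  constructor
  · intro hq
    obtain ⟨-, hhalf, hrt⟩ := mem_cfilter.mp hq
    rw [contract_isHalf_iff hTH] at hhalf
    rw [contract_rt_mk] at hrt
    replace hrt := mk_eq_mk_iff.mp hrt
    refine Finset.mem_image.mpr ⟨k, mem_cfilter.mpr ⟨Finset.mem_univ _, hhalf.2, ?_, hrt⟩, rfl⟩
    intro hmem
    exact hhalf.1 ((half_mem_sgSet_iff hhalf.2).mpr hmem)
  · intro hq
    obtain ⟨k₂, hk, hq⟩ := Finset.mem_image.mp hq
    obtain ⟨-, hhalf, hnot, heqv⟩ := mem_cfilter.mp hk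
    have hk₂n : k₂ ∉ sgSet K TH := fun hmem =>
      hnot ((half_mem_sgSet_iff hhalf).mp hmem)
    refine mem_cfilter.mpr ⟨Finset.mem_univ _, ?_, ?_⟩
    · rw [← hq, contract_isHalf_iff hTH]
      exact ⟨hk₂n, hhalf⟩
    · rw [← hq, contract_rt_mk]
      exact mk_eq_mk_iff.mpr heqv

theorem mk_injOn_of_not_mem {s : Finset K.X} (hs : ∀ a ∈ s, a ∉ sgSet K TH) :
    Set.InjOn (Quotient.mk (contrSetoid K TH)) ↑s := by
  intro a ha b hb hab
  exact eq_of_mk_eq (hs a (Finset.mem_coe.mp ha)) hab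

theorem even_card_of_invol {α : Type*} [DecidableEq α] (f : α → α) (s : Finset α)
    (hf : ∀ x ∈ s, f x ∈ s ∧ f (f x) = x ∧ f x ≠ x) : ∃ k, s.card = 2 * k := by
  classical
  induction s using Finset.strongInduction with
  | _ s ih =>
    rcases s.eq_empty_or_nonempty with rfl | ⟨a, ha⟩
    · exact ⟨0, rfl⟩
    · have hfa := hf a ha
      set t := (s.erase a).erase (f a) with ht
      have htsub : t ⊂ s := by
        refine Finset.ssubset_of_subset_of_ssubset ?_ (Finset.erase_ssubset ha)
        exact Finset.erase_subset _ _
      have hmem2 : f a ∈ s.erase a := Finset.mem_erase.mpr ⟨hfa.2.2, hfa.1⟩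
      have hcard : t.card = s.card - 2 := by
        have e1 : (s.erase a).card = s.card - 1 := Finset.card_erase_of_mem ha
        have e2 : t.card = (s.erase a).card - 1 := Finset.card_erase_of_mem hmem2
        omega
      obtain ⟨k, hk⟩ := ih t htsub (fun x hx => by
        have hxs : x ∈ s := Finset.mem_of_mem_erase (Finset.mem_of_mem_erase hx)
        have hxa : x ≠ a := Finset.ne_of_mem_erase (Finset.mem_of_mem_erase hx)
        have hxfa : x ≠ f a := Finset.ne_of_mem_erase hx
        have hx2 := hf x hxs
        refine ⟨?_, hx2.2.1, hx2.2.2⟩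
        refine Finset.mem_erase.mpr ⟨?_, Finset.mem_erase.mpr ⟨?_, hx2.1⟩⟩
        · intro hc
          exact hxa (by rw [← hx2.2.1, hc, hfa.2.1])
        · intro hc
          exact hxfa (by rw [← hx2.2.1, hc]))
      refine ⟨k + 1, ?_⟩
      have h2 : 2 ≤ s.card := by
        have h1 : 1 ≤ (s.erase a).card := Finset.card_pos.mpr ⟨f a, hmem2⟩
        have h3 := Finset.card_erase_of_mem ha
        omega
      omega

/-- `n`-step paths in the vertex graph along edges of `TH`. -/
def nbrPath (K : PGraph) (TH : Finset K.X) : ℕ → K.X → K.X → Prop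
  | 0 => Eq
  | n+1 => fun u w => ∃ h, h ∈ TH ∧ K.rt h = u ∧ nbrPath K TH n (K.rt (K.inv h)) w

theorem nbrPath_trans (K : PGraph) (TH : Finset K.X) :
    ∀ m n u v w, nbrPath K TH m u v → nbrPath K TH n v w → nbrPath K TH (m + n) u w := by
  intro m
  induction m with
  | zero =>
    intro n u v w h1 h2
    have : u = v := h1
    rw [Nat.zero_add]
    exact this ▸ h2
  | succ m ih =>
    intro n u v w h1 h2
    obtain ⟨h, hm, hrt, hp⟩ := h1
    have : m + 1 + n = (m + n) + 1 := by omega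
    rw [this]
    exact ⟨h, hm, hrt, ih n _ v w hp h2⟩

theorem nbrPath_symm (K : PGraph) (TH : Finset K.X) (hTH : IsEdgeSet K TH) :
    ∀ n u w, nbrPath K TH n u w → nbrPath K TH n w u := by
  intro n
  induction n with
  | zero =>
    intro u w h
    exact (h : u = w).symm
  | succ n ih =>
    intro u w h
    obtain ⟨h₀, hm, hrt, hp⟩ := h
    have h1 : nbrPath K TH 1 (K.rt (K.inv h₀)) u :=
      ⟨K.inv h₀, (hTH h₀ hm).2, rfl, by
        show K.rt (K.inv (K.inv h₀)) = u
        rw [K.inv_invol, hrt]⟩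
    have := nbrPath_trans K TH n 1 w (K.rt (K.inv h₀)) u (ih _ _ hp) h1
    exact this

theorem eqv_nbrPath (K : PGraph) (TH : Finset K.X) (hTH : IsEdgeSet K TH) :
    ∀ a b, Relation.EqvGen (contrRel K TH) a b →
      ∃ n, nbrPath K TH n (K.rt a) (K.rt b) := by
  intro a b h
  induction h with
  | rel a b hab =>
    rcases hab.2.2 with h1 | h1
    · refine ⟨0, ?_⟩
      show K.rt a = K.rt b
      rw [← h1, K.rt_idem]
    · by_cases ha : K.IsHalf a
      · have haTH : a ∈ TH := (half_mem_sgSet_iff ha).mp hab.1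
        refine ⟨1, a, haTH, rfl, ?_⟩
        show K.rt (K.inv a) = K.rt b
        rw [h1]
      · have ha' : K.rt a = a := not_not.mp ha
        refine ⟨0, ?_⟩
        show K.rt a = K.rt b
        rw [← h1, ← ha', K.inv_fix_rt, K.rt_idem, ha']
  | refl a => exact ⟨0, rfl⟩
  | symm a b _ ih =>
    obtain ⟨n, hn⟩ := ih
    exact ⟨n, nbrPath_symm K TH hTH n _ _ hn⟩
  | trans a b c _ _ ih1 ih2 =>
    obtain ⟨m, hm⟩ := ih1
    obtain ⟨n, hn⟩ := ih2
    exact ⟨m + n, nbrPath_trans K TH m n _ _ _ hm hn⟩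

theorem component_vertex_bound (K : PGraph) (TH : Finset K.X) (hTH : IsEdgeSet K TH)
    (x : K.X) (hx : x ∈ sgSet K TH) :
    2 * (cfilter (fun y => K.IsVertex y) (componentSet K TH x)).card ≤
      (cfilter (fun y => K.IsEdgeHalf y) (componentSet K TH x)).card + 2 := by
  classical
  set C := componentSet K TH x with hC
  set V := cfilter (fun y => K.IsVertex y) C with hV
  set HH := cfilter (fun y => K.IsEdgeHalf y) C with hHH
  have memC : ∀ y, y ∈ C ↔ Relation.EqvGen (contrRel K TH) x y := by
    intro y
    rw [hC]
    unfold componentSet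
    rw [mem_cfilter]
    exact ⟨fun h => h.2, fun h => ⟨Finset.mem_univ _, h⟩⟩
  set v₀ := K.rt x with hv₀
  have hv₀V : v₀ ∈ V := by
    rw [hV, mem_cfilter]
    exact ⟨(memC _).mpr (eqv_rt K TH hx), K.rt_idem x⟩
  have hex : ∀ w ∈ V, ∃ n, nbrPath K TH n w v₀ := by
    intro w hw
    rcases mem_cfilter.mp hw with ⟨hwC, hwV⟩
    have h1 : Relation.EqvGen (contrRel K TH) w x :=
      Relation.EqvGen.symm _ _ ((memC _).mp hwC)
    obtain ⟨n, hn⟩ := eqv_nbrPath K TH hTH w x h1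
    exact ⟨n, by rwa [hwV] at hn⟩
  set dd : K.X → ℕ := fun w =>
    if h : ∃ n, nbrPath K TH n w v₀ then Nat.find h else 0 with hdd
  have hstep : ∀ w, ∃ h, w ∈ V.erase v₀ →
      h ∈ TH ∧ K.rt h = w ∧ dd (K.rt (K.inv h)) < dd w := by
    intro w
    by_cases hw : w ∈ V.erase v₀
    · rcases Finset.mem_erase.mp hw with ⟨hne, hwV⟩
      have hex' := hex w hwV
      have hddw : dd w = Nat.find hex' := by
        rw [hdd]
        exact dif_pos hex'
      have hpos : Nat.find hex' ≠ 0 := by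
        intro h0
        have := Nat.find_spec hex'
        rw [h0] at this
        exact hne this
      obtain ⟨m, hm⟩ := Nat.exists_eq_succ_of_ne_zero hpos
      have hspec := Nat.find_spec hex'
      rw [hm] at hspec
      obtain ⟨h, hmem, hrt, hp⟩ := hspec
      refine ⟨h, fun _ => ⟨hmem, hrt, ?_⟩⟩
      have hle : dd (K.rt (K.inv h)) ≤ m := by
        have hex2 : ∃ n, nbrPath K TH n (K.rt (K.inv h)) v₀ := ⟨m, hp⟩
        rw [hdd]
        simp only [dif_pos hex2]
        exact Nat.find_min' hex2 hp
      omega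
    · exact ⟨w, fun hc => absurd hc hw⟩
  choose g hg using hstep
  set A := V.erase v₀ with hA
  have key : ∀ w ∈ A, g w ∈ TH ∧ K.rt (g w) = w ∧ dd (K.rt (K.inv (g w))) < dd w :=
    fun w hw => hg w hw
  have hinj1 : Set.InjOn g ↑A := by
    intro a ha b hb hgab
    rw [← (key a ha).2.1, hgab, (key b hb).2.1]
  have hinj2 : Set.InjOn (fun w => K.inv (g w)) ↑A := by
    intro a ha b hb hab
    apply hinj1 ha hb
    have := congrArg K.inv hab
    simpa [K.inv_invol] using this
  have hmemCg : ∀ w ∈ A, Relation.EqvGen (contrRel K TH) x (g w) := by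
    intro w hw
    have hwV : w ∈ V := Finset.mem_of_mem_erase hw
    have hwC : Relation.EqvGen (contrRel K TH) x w :=
      (memC _).mp (mem_cfilter.mp hwV).1
    have hgsg : g w ∈ sgSet K TH := Finset.mem_union.mpr (Or.inl (key w hw).1)
    have : Relation.EqvGen (contrRel K TH) (g w) w := by
      have := eqv_rt K TH hgsg
      rwa [(key w hw).2.1] at this
    exact Relation.EqvGen.trans _ _ _ hwC (Relation.EqvGen.symm _ _ this)
  have hsub1 : A.image g ⊆ HH := by
    intro y hy
    rcases Finset.mem_image.mp hy with ⟨w, hw, rfl⟩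
    rw [hHH, mem_cfilter]
    exact ⟨(memC _).mpr (hmemCg w hw), mem_TH_isEdgeHalf hTH (key w hw).1⟩
  have hsub2 : A.image (fun w => K.inv (g w)) ⊆ HH := by
    intro y hy
    rcases Finset.mem_image.mp hy with ⟨w, hw, rfl⟩
    rw [hHH, mem_cfilter]
    have hgsg : g w ∈ sgSet K TH := Finset.mem_union.mpr (Or.inl (key w hw).1)
    refine ⟨(memC _).mpr (Relation.EqvGen.trans _ _ _ (hmemCg w hw)
      (eqv_inv K TH hTH hgsg)), isEdgeHalf_inv K (mem_TH_isEdgeHalf hTH (key w hw).1)⟩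
  have hdisj : Disjoint (A.image g) (A.image (fun w => K.inv (g w))) := by
    rw [Finset.disjoint_left]
    intro y hy1 hy2
    rcases Finset.mem_image.mp hy1 with ⟨w₁, hw₁, he₁⟩
    rcases Finset.mem_image.mp hy2 with ⟨w₂, hw₂, he₂⟩
    have e1 : g w₁ = K.inv (g w₂) := by rw [he₁, ← he₂]
    have e2 : g w₂ = K.inv (g w₁) := by rw [e1, K.inv_invol]
    have d1 : dd w₁ < dd w₂ := by
      have := (key w₂ hw₂).2.2
      rwa [← e1, (key w₁ hw₁).2.1] at this
    have d2 : dd w₂ < dd w₁ := by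
      have := (key w₁ hw₁).2.2
      rwa [← e2, (key w₂ hw₂).2.1] at this
    omega
  have hcard : 2 * A.card ≤ HH.card := by
    have h1 : (A.image g ∪ A.image (fun w => K.inv (g w))).card =
        A.card + A.card := by
      rw [Finset.card_union_of_disjoint hdisj, Finset.card_image_of_injOn hinj1,
        Finset.card_image_of_injOn hinj2]
    have h2 : (A.image g ∪ A.image (fun w => K.inv (g w))) ⊆ HH :=
      Finset.union_subset hsub1 hsub2
    have := Finset.card_le_card h2
    omega
  have hAcard : A.card = V.card - 1 := Finset.card_erase_of_mem hv₀V
  have hVpos : 1 ≤ V.card := Finset.card_pos.mpr ⟨v₀, hv₀V⟩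
  omega

theorem comp_edgeHalf_even (K : PGraph) (TH : Finset K.X) (hTH : IsEdgeSet K TH)
    (x : K.X) (hx : x ∈ sgSet K TH) :
    ∃ k, (cfilter (fun y => K.IsEdgeHalf y) (componentSet K TH x)).card = 2 * k := by
  classical
  apply even_card_of_invol K.inv
  intro y hy
  rcases mem_cfilter.mp hy with ⟨hyC, hyE⟩
  have hyC' : Relation.EqvGen (contrRel K TH) x y := by
    have := mem_cfilter.mp (show y ∈ componentSet K TH x from hyC)
    exact this.2
  have hysg : y ∈ sgSet K TH := eqv_of_mem_of_eqv hx hyC'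
  refine ⟨mem_cfilter.mpr ⟨?_, isEdgeHalf_inv K hyE⟩, K.inv_invol y, hyE.2⟩
  unfold componentSet
  rw [mem_cfilter]
  exact ⟨Finset.mem_univ _,
    Relation.EqvGen.trans _ _ _ hyC' (eqv_inv K TH hTH hysg)⟩

theorem finsetGenus_nonneg (W : WGraph) (TH : Finset W.X) (hTH : IsEdgeSet W.toPGraph TH)
    (x : W.X) (hx : x ∈ sgSet W.toPGraph TH) :
    0 ≤ finsetGenus W (componentSet W.toPGraph TH x) := by
  obtain ⟨k, hk⟩ := comp_edgeHalf_even W.toPGraph TH hTH x hx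
  have hbound := component_vertex_bound W.toPGraph TH hTH x hx
  unfold finsetGenus
  rw [hk] at hbound
  have hdiv : (2 * k) / 2 = k := by omega
  rw [hk, hdiv]
  have hV : (cfilter (fun y => W.toPGraph.IsVertex y)
      (componentSet W.toPGraph TH x)).card ≤ k + 1 := by omega
  have hsum : (0 : ℤ) ≤ ∑ v ∈ cfilter (fun y => W.toPGraph.IsVertex y)
      (componentSet W.toPGraph TH x), (W.gw v : ℤ) :=
    Finset.sum_nonneg fun v _ => Int.natCast_nonneg _
  have hVZ : ((cfilter (fun y => W.toPGraph.IsVertex y)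
      (componentSet W.toPGraph TH x)).card : ℤ) ≤ (k : ℤ) + 1 := by exact_mod_cast hV
  linarith

section Morph

variable {P' P : PGraph} (φ : HarmonicHom P' P)

theorem map_vertex {x : P'.X} (hx : P'.IsVertex x) : P.IsVertex (φ.toFun x) := by
  show P.rt (φ.toFun x) = φ.toFun x
  rw [← φ.map_rt, hx]

theorem map_half (hfin : φ.Finite) {x : P'.X} (hx : P'.IsHalf x) :
    P.IsHalf (φ.toFun x) := by
  intro hc
  have := (φ.deg_zero_iff x hx).mpr hc
  exact Nat.lt_irrefl 0 (this ▸ hfin x hx)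

theorem vertex_of_map_vertex (hfin : φ.Finite) {x : P'.X}
    (hx : P.IsVertex (φ.toFun x)) : P'.IsVertex x := by
  by_contra hc
  exact map_half φ hfin hc hx

theorem edgeHalf_of_map {x : P'.X} (hx : P'.IsHalf x)
    (hE : P.IsEdgeHalf (φ.toFun x)) : P'.IsEdgeHalf x := by
  refine ⟨hx, fun hc => ?_⟩
  apply hE.2
  rw [← φ.map_inv, hc]

theorem mem_preim_of {SH : Finset P.X} (hSH : IsEdgeSet P SH) {x : P'.X}
    (hx : P'.IsHalf x) (hmem : φ.toFun x ∈ SH) : x ∈ preimHalves φ SH :=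
  mem_cfilter.mpr ⟨Finset.mem_univ _,
    edgeHalf_of_map φ hx (mem_TH_isEdgeHalf hSH hmem), hmem⟩

theorem map_sgSet {SH : Finset P.X} {x : P'.X}
    (hx : x ∈ sgSet P' (preimHalves φ SH)) : φ.toFun x ∈ sgSet P SH := by
  rcases Finset.mem_union.mp hx with h1 | h1
  · rcases mem_cfilter.mp h1 with ⟨-, -, hmem⟩
    exact Finset.mem_union.mpr (Or.inl hmem)
  · rcases Finset.mem_image.mp h1 with ⟨y, hy, rfl⟩
    rcases mem_cfilter.mp hy with ⟨-, -, hmem⟩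
    rw [φ.map_rt]
    exact Finset.mem_union.mpr (Or.inr (Finset.mem_image_of_mem _ hmem))

theorem map_eqv {SH : Finset P.X} {a b : P'.X}
    (h : Relation.EqvGen (contrRel P' (preimHalves φ SH)) a b) :
    Relation.EqvGen (contrRel P SH) (φ.toFun a) (φ.toFun b) := by
  induction h with
  | rel a b hab =>
    refine Relation.EqvGen.rel _ _ ⟨map_sgSet φ hab.1, map_sgSet φ hab.2.1, ?_⟩
    rcases hab.2.2 with h1 | h1
    · exact Or.inl (by rw [← φ.map_rt, h1])
    · exact Or.inr (by rw [← φ.map_inv, h1])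
  | refl a => exact Relation.EqvGen.refl _
  | symm a b _ ih => exact Relation.EqvGen.symm _ _ ih
  | trans a b c _ _ ih1 ih2 => exact Relation.EqvGen.trans _ _ _ ih1 ih2

theorem deg_pos_of_vertex_mem (hfin : φ.Finite) {SH : Finset P.X}
    (hSH : IsEdgeSet P SH) {v : P'.X} (hv : P'.IsVertex v)
    (hmem : v ∈ sgSet P' (preimHalves φ SH)) : 0 < φ.deg v := by
  obtain ⟨h', hh', hrt⟩ := vertex_mem_sgSet (preimHalves_isEdgeSet φ SH hSH) hv hmem
  have hE : P'.IsEdgeHalf h' := (preimHalves_isEdgeSet φ SH hSH h' hh').1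
  have hhalf : P'.IsHalf h' := hE.1
  have hmap : P.IsHalf (φ.toFun h') := map_half φ hfin hhalf
  have hh : P.rt (φ.toFun h') = φ.toFun v := by rw [← φ.map_rt, hrt]
  rw [φ.harmonic v hv (φ.toFun h') hmap hh]
  have hmemf : h' ∈ cfilter (fun k => φ.toFun k = φ.toFun h') (P'.tangents v) :=
    mem_cfilter.mpr ⟨mem_cfilter.mpr ⟨Finset.mem_univ _, hhalf, hrt⟩, rfl⟩
  calc 0 < φ.deg h' := hfin h' hhalf
    _ ≤ _ := Finset.single_le_sum (fun i _ => Nat.zero_le _) hmemf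

theorem exists_tangent_over {v : P'.X} (hv : P'.IsVertex v) (hdeg : 0 < φ.deg v)
    {h : P.X} (hh : P.IsHalf h) (hrt : P.rt h = φ.toFun v) :
    ∃ k, P'.IsHalf k ∧ P'.rt k = v ∧ φ.toFun k = h := by
  rw [φ.harmonic v hv h hh hrt] at hdeg
  by_contra hc
  push_neg at hc
  have hempty : cfilter (fun h' => φ.toFun h' = h) (P'.tangents v) = ∅ := by
    apply Finset.eq_empty_of_forall_notMem
    intro k hk
    rcases mem_cfilter.mp hk with ⟨hk1, hk2⟩
    rcases mem_cfilter.mp hk1 with ⟨-, hk3, hk4⟩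
    exact hc k hk3 hk4 hk2
  rw [hempty, Finset.sum_empty] at hdeg
  exact Nat.lt_irrefl 0 hdeg

theorem lift_eqv (hfin : φ.Finite) {SH : Finset P.X} (hSH : IsEdgeSet P SH) :
    ∀ a b, Relation.EqvGen (contrRel P SH) a b →
      (∀ x', x' ∈ sgSet P' (preimHalves φ SH) → φ.toFun x' = a →
        ∃ x'', x'' ∈ sgSet P' (preimHalves φ SH) ∧
          Relation.EqvGen (contrRel P' (preimHalves φ SH)) x' x'' ∧ φ.toFun x'' = b) ∧
      (∀ x', x' ∈ sgSet P' (preimHalves φ SH) → φ.toFun x' = b →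
        ∃ x'', x'' ∈ sgSet P' (preimHalves φ SH) ∧
          Relation.EqvGen (contrRel P' (preimHalves φ SH)) x' x'' ∧ φ.toFun x'' = a) := by
  have hS' := preimHalves_isEdgeSet φ SH hSH
  intro a b h
  induction h with
  | rel a b hab =>
    obtain ⟨hasg, hbsg, hor⟩ := hab
    constructor
    · -- forward
      intro x' hx' hφ
      rcases hor with h1 | h1
      · exact ⟨P'.rt x', mem_sgSet_rt P' _ hx', eqv_rt P' _ hx',
          by rw [φ.map_rt, hφ, h1]⟩
      · by_cases hv : P'.IsVertex x'
        · have hav : P.IsVertex a := hφ ▸ map_vertex φ hv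
          have : b = a := by rw [← h1, ← hav, P.inv_fix_rt, hav]
          exact ⟨x', hx', Relation.EqvGen.refl _, by rw [hφ, this]⟩
        · exact ⟨P'.inv x', mem_sgSet_inv P' _ hS' hx', eqv_inv P' _ hS' hx',
            by rw [φ.map_inv, hφ, h1]⟩
    · -- backward
      intro x' hx' hφ
      rcases hor with h1 | h1
      · by_cases hav : P.IsVertex a
        · exact ⟨x', hx', Relation.EqvGen.refl _, by rw [hφ, ← h1, hav]⟩
        · have haSH : a ∈ SH := (half_mem_sgSet_iff hav).mp hasg
          have hbv : P.IsVertex b := by rw [← h1]; exact P.rt_idem a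
          have hx'v : P'.IsVertex x' :=
            vertex_of_map_vertex φ hfin (by rw [hφ]; exact hbv)
          have hdeg : 0 < φ.deg x' := deg_pos_of_vertex_mem φ hfin hSH hx'v hx'
          obtain ⟨k, hkh, hkr, hkφ⟩ := exists_tangent_over φ hx'v hdeg hav
            (by rw [h1, hφ])
          have hkS : k ∈ preimHalves φ SH := mem_preim_of φ hSH hkh (hkφ ▸ haSH)
          have hksg : k ∈ sgSet P' (preimHalves φ SH) :=
            Finset.mem_union.mpr (Or.inl hkS)
          refine ⟨k, hksg, ?_, hkφ⟩
          have := eqv_rt P' (preimHalves φ SH) hksg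
          rw [hkr] at this
          exact Relation.EqvGen.symm _ _ this
      · by_cases hab' : a = b
        · exact ⟨x', hx', Relation.EqvGen.refl _, by rw [hφ, hab']⟩
        · have hbh : P.IsHalf b := by
            intro hbv
            apply hab'
            rw [← P.inv_invol a, h1, ← hbv, P.inv_fix_rt, hbv]
          have hx'h : P'.IsHalf x' := by
            intro hc
            exact hbh (hφ ▸ map_vertex φ hc)
          exact ⟨P'.inv x', mem_sgSet_inv P' _ hS' hx', eqv_inv P' _ hS' hx',
            by rw [φ.map_inv, hφ, ← h1, P.inv_invol]⟩
  | refl a =>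
    exact ⟨fun x' hx' hφ => ⟨x', hx', Relation.EqvGen.refl _, hφ⟩,
      fun x' hx' hφ => ⟨x', hx', Relation.EqvGen.refl _, hφ⟩⟩
  | symm a b _ ih => exact ⟨ih.2, ih.1⟩
  | trans a b c _ _ ih1 ih2 =>
    constructor
    · intro x' hx' hφ
      obtain ⟨y, hy1, hy2, hy3⟩ := ih1.1 x' hx' hφ
      obtain ⟨z, hz1, hz2, hz3⟩ := ih2.1 y hy1 hy3
      exact ⟨z, hz1, Relation.EqvGen.trans _ _ _ hy2 hz2, hz3⟩
    · intro x' hx' hφ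
      obtain ⟨y, hy1, hy2, hy3⟩ := ih2.2 x' hx' hφ
      obtain ⟨z, hz1, hz2, hz3⟩ := ih1.2 y hy1 hy3
      exact ⟨z, hz1, Relation.EqvGen.trans _ _ _ hy2 hz2, hz3⟩

theorem sum_deg_fiber {h : P.X} (hh : P.IsHalf h) (W : Finset P'.X)
    (hW : ∀ u' ∈ W, P'.IsVertex u' ∧ φ.toFun u' = P.rt h) :
    ∑ u' ∈ W, φ.deg u' =
      ∑ k' ∈ cfilter (fun k' => P'.IsHalf k' ∧ φ.toFun k' = h ∧ P'.rt k' ∈ W)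
        Finset.univ, φ.deg k' := by
  classical
  have h1 : ∀ u' ∈ W, φ.deg u' =
      ∑ k' ∈ cfilter (fun k' => φ.toFun k' = h) (P'.tangents u'), φ.deg k' :=
    fun u' hu' => φ.harmonic u' (hW u' hu').1 h hh (by rw [(hW u' hu').2])
  rw [Finset.sum_congr rfl h1]
  have hdisj : (↑W : Set P'.X).PairwiseDisjoint
      (fun u' => cfilter (fun k' => φ.toFun k' = h) (P'.tangents u')) := by
    intro u₁ _ u₂ _ hne
    dsimp only [Function.onFun]
    rw [Finset.disjoint_left]
    intro k hk1 hk2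
    rcases mem_cfilter.mp hk1 with ⟨hk1', -⟩
    rcases mem_cfilter.mp hk2 with ⟨hk2', -⟩
    exact hne ((mem_cfilter.mp hk1').2.2 ▸ (mem_cfilter.mp hk2').2.2.symm ▸ rfl)
  rw [← Finset.sum_biUnion hdisj]
  congr 1
  apply Finset.ext
  intro k
  rw [Finset.mem_biUnion, mem_cfilter]
  constructor
  · rintro ⟨u', hu', hk⟩
    rcases mem_cfilter.mp hk with ⟨hk1, hk2⟩
    rcases mem_cfilter.mp hk1 with ⟨-, hk3, hk4⟩
    exact ⟨Finset.mem_univ _, hk3, hk2, hk4 ▸ hu'⟩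
  · rintro ⟨-, hk1, hk2, hk3⟩
    exact ⟨P'.rt k, hk3,
      mem_cfilter.mpr ⟨mem_cfilter.mpr ⟨Finset.mem_univ _, hk1, rfl⟩, hk2⟩⟩

/-- The sum of degrees over the vertices of the component of `x` lying over `u`. -/
noncomputable def fiberSum (SH : Finset P.X) (x : P'.X) (u : P.X) : ℕ :=
  ∑ u' ∈ cfilter (fun u' => P'.IsVertex u' ∧
    Relation.EqvGen (contrRel P' (preimHalves φ SH)) u' x ∧ φ.toFun u' = u)
    Finset.univ, φ.deg u'

theorem fiberSum_rt (SH : Finset P.X) (x : P'.X) {h : P.X} (hh : P.IsHalf h) :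
    fiberSum φ SH x (P.rt h) =
      ∑ k' ∈ cfilter (fun k' => P'.IsHalf k' ∧ φ.toFun k' = h ∧
        Relation.EqvGen (contrRel P' (preimHalves φ SH)) (P'.rt k') x)
        Finset.univ, φ.deg k' := by
  unfold fiberSum
  rw [sum_deg_fiber φ hh _
    (fun u' hu' => ⟨(mem_cfilter.mp hu').2.1, (mem_cfilter.mp hu').2.2.2⟩)]
  congr 1
  apply Finset.ext
  intro k
  constructor
  · intro hk
    rcases mem_cfilter.mp hk with ⟨-, hk1, hk2, hk3⟩
    rcases mem_cfilter.mp hk3 with ⟨-, -, heqv, -⟩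
    exact mem_cfilter.mpr ⟨Finset.mem_univ _, hk1, hk2, heqv⟩
  · intro hk
    rcases mem_cfilter.mp hk with ⟨-, hk1, hk2, heqv⟩
    exact mem_cfilter.mpr ⟨Finset.mem_univ _, hk1, hk2, mem_cfilter.mpr
      ⟨Finset.mem_univ _, P'.rt_idem k, heqv, by rw [φ.map_rt, hk2]⟩⟩

theorem fiberSum_step (hfin : φ.Finite) {SH : Finset P.X} (hSH : IsEdgeSet P SH)
    (x : P'.X) {h : P.X} (hh : h ∈ SH) :
    fiberSum φ SH x (P.rt h) = fiberSum φ SH x (P.rt (P.inv h)) := by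
  have hS' := preimHalves_isEdgeSet φ SH hSH
  have hhE := mem_TH_isEdgeHalf hSH hh
  have hinvE := isEdgeHalf_inv P hhE
  rw [fiberSum_rt φ SH x hhE.1, fiberSum_rt φ SH x hinvE.1]
  have main : ∀ (g : P.X), g ∈ SH → ∀ k' ∈ cfilter (fun k' => P'.IsHalf k' ∧
      φ.toFun k' = g ∧ Relation.EqvGen (contrRel P' (preimHalves φ SH)) (P'.rt k') x)
      Finset.univ,
      P'.inv k' ∈ cfilter (fun k' => P'.IsHalf k' ∧ φ.toFun k' = P.inv g ∧
        Relation.EqvGen (contrRel P' (preimHalves φ SH)) (P'.rt k') x) Finset.univ := by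
    intro g hg k' hk'
    rcases mem_cfilter.mp hk' with ⟨-, hhalf, hφk, heqv⟩
    have hkE : P'.IsEdgeHalf k' :=
      edgeHalf_of_map φ hhalf (hφk ▸ mem_TH_isEdgeHalf hSH hg)
    have hkS : k' ∈ preimHalves φ SH := mem_preim_of φ hSH hhalf (hφk ▸ hg)
    have hksg : k' ∈ sgSet P' (preimHalves φ SH) := Finset.mem_union.mpr (Or.inl hkS)
    have hinvsg : P'.inv k' ∈ sgSet P' (preimHalves φ SH) :=
      mem_sgSet_inv P' _ hS' hksg
    have e1 : Relation.EqvGen (contrRel P' (preimHalves φ SH)) k' x :=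
      Relation.EqvGen.trans _ _ _ (eqv_rt P' _ hksg) heqv
    have e2 : Relation.EqvGen (contrRel P' (preimHalves φ SH)) (P'.inv k') x :=
      Relation.EqvGen.trans _ _ _
        (Relation.EqvGen.symm _ _ (eqv_inv P' _ hS' hksg)) e1
    have e3 : Relation.EqvGen (contrRel P' (preimHalves φ SH)) (P'.rt (P'.inv k')) x :=
      Relation.EqvGen.trans _ _ _
        (Relation.EqvGen.symm _ _ (eqv_rt P' _ hinvsg)) e2
    exact mem_cfilter.mpr ⟨Finset.mem_univ _, (isEdgeHalf_inv P' hkE).1,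
      by rw [φ.map_inv, hφk], e3⟩
  refine Finset.sum_nbij' (fun k' => P'.inv k') (fun k' => P'.inv k')
    (main h hh) ?_ (fun a _ => P'.inv_invol a) (fun a _ => P'.inv_invol a) ?_
  · intro k' hk'
    have := main (P.inv h) ((hSH h hh).2) k' hk'
    rwa [P.inv_invol] at this
  · intro k' hk'
    rcases mem_cfilter.mp hk' with ⟨-, hhalf, hφk, -⟩
    have hkE : P'.IsEdgeHalf k' :=
      edgeHalf_of_map φ hhalf (hφk ▸ mem_TH_isEdgeHalf hSH hh)
    exact (φ.deg_edge k' hkE).symm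

theorem fiberSum_eqv (hfin : φ.Finite) {SH : Finset P.X} (hSH : IsEdgeSet P SH)
    (x : P'.X) {u₁ u₂ : P.X} (h1 : P.IsVertex u₁) (h2 : P.IsVertex u₂)
    (heqv : Relation.EqvGen (contrRel P SH) u₁ u₂) :
    fiberSum φ SH x u₁ = fiberSum φ SH x u₂ := by
  have claim : ∀ a b, Relation.EqvGen (contrRel P SH) a b →
      fiberSum φ SH x (P.rt a) = fiberSum φ SH x (P.rt b) := by
    intro a b h
    induction h with
    | rel a b hab =>
      rcases hab.2.2 with hr | hr
      · rw [← hr, P.rt_idem]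
      · by_cases ha : P.IsHalf a
        · have haSH : a ∈ SH := (half_mem_sgSet_iff ha).mp hab.1
          rw [← hr]
          exact fiberSum_step φ hfin hSH x haSH
        · have ha' : P.rt a = a := not_not.mp ha
          rw [← hr, ← ha', P.inv_fix_rt]
    | refl a => rfl
    | symm a b _ ih => exact ih.symm
    | trans a b c _ _ ih1 ih2 => exact ih1.trans ih2
  have := claim u₁ u₂ heqv
  rwa [h1, h2] at this

end Morph

end Aux

section Chi

theorem sum_valence (K : PGraph) (TH : Finset K.X) (hTH : IsEdgeSet K TH)
    (x : K.X) (hx : x ∈ sgSet K TH) :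
    ∑ u ∈ cfilter (fun y => K.IsVertex y) (componentSet K TH x), K.valence u =
      (cfilter (fun y => K.IsEdgeHalf y) (componentSet K TH x)).card +
      (cfilter (fun k => K.IsHalf k ∧ k ∉ TH ∧
        Relation.EqvGen (contrRel K TH) (K.rt k) x) Finset.univ).card := by
  classical
  set Vc := cfilter (fun y => K.IsVertex y) (componentSet K TH x) with hVc
  have memVc : ∀ u, u ∈ Vc ↔ (K.IsVertex u ∧ Relation.EqvGen (contrRel K TH) x u) := by
    intro u
    rw [hVc, mem_cfilter]
    unfold componentSet
    rw [mem_cfilter]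
    exact ⟨fun h => ⟨h.2, h.1.2⟩, fun h => ⟨⟨Finset.mem_univ _, h.2⟩, h.1⟩⟩
  have hdisj : ∀ u₁ ∈ Vc, ∀ u₂ ∈ Vc, u₁ ≠ u₂ → Disjoint (K.tangents u₁) (K.tangents u₂) := by
    intro u₁ _ u₂ _ hne
    rw [Finset.disjoint_left]
    intro k hk1 hk2
    exact hne ((mem_cfilter.mp hk1).2.2 ▸ (mem_cfilter.mp hk2).2.2.symm ▸ rfl)
  have hcard : ∑ u ∈ Vc, K.valence u = (Vc.biUnion K.tangents).card :=
    (Finset.card_biUnion hdisj).symm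
  rw [hcard]
  have hsplit : Vc.biUnion K.tangents =
      cfilter (fun y => K.IsEdgeHalf y) (componentSet K TH x) ∪
      cfilter (fun k => K.IsHalf k ∧ k ∉ TH ∧
        Relation.EqvGen (contrRel K TH) (K.rt k) x) Finset.univ := by
    apply Finset.ext
    intro k
    rw [Finset.mem_biUnion, Finset.mem_union]
    constructor
    · rintro ⟨u, hu, hk⟩
      rcases mem_cfilter.mp hk with ⟨-, hhalf, hrt⟩
      have heqv : Relation.EqvGen (contrRel K TH) x (K.rt k) := by
        rw [hrt]; exact ((memVc u).mp hu).2
      by_cases hmem : k ∈ TH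
      · left
        have hksg : k ∈ sgSet K TH := Finset.mem_union.mpr (Or.inl hmem)
        refine mem_cfilter.mpr ⟨?_, mem_TH_isEdgeHalf hTH hmem⟩
        unfold componentSet
        rw [mem_cfilter]
        exact ⟨Finset.mem_univ _, Relation.EqvGen.trans _ _ _ heqv
          (Relation.EqvGen.symm _ _ (eqv_rt K TH hksg))⟩
      · right
        exact mem_cfilter.mpr ⟨Finset.mem_univ _, hhalf, hmem,
          Relation.EqvGen.symm _ _ heqv⟩
    · rintro (hk | hk)
      · rcases mem_cfilter.mp hk with ⟨hkC, hkE⟩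
        have heqv : Relation.EqvGen (contrRel K TH) x k := by
          have := mem_cfilter.mp (show k ∈ componentSet K TH x from hkC)
          exact this.2
        have hksg : k ∈ sgSet K TH := eqv_of_mem_of_eqv hx heqv
        refine ⟨K.rt k, (memVc _).mpr ⟨K.rt_idem k, Relation.EqvGen.trans _ _ _ heqv
          (eqv_rt K TH hksg)⟩, mem_cfilter.mpr ⟨Finset.mem_univ _, hkE.1, rfl⟩⟩
      · rcases mem_cfilter.mp hk with ⟨-, hhalf, -, heqv⟩
        exact ⟨K.rt k, (memVc _).mpr ⟨K.rt_idem k, Relation.EqvGen.symm _ _ heqv⟩,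
          mem_cfilter.mpr ⟨Finset.mem_univ _, hhalf, rfl⟩⟩
  have hdisj2 : Disjoint
      (cfilter (fun y => K.IsEdgeHalf y) (componentSet K TH x))
      (cfilter (fun k => K.IsHalf k ∧ k ∉ TH ∧
        Relation.EqvGen (contrRel K TH) (K.rt k) x) Finset.univ) := by
    rw [Finset.disjoint_left]
    intro k hk1 hk2
    have hkE := (mem_cfilter.mp hk1).2
    have heqv : Relation.EqvGen (contrRel K TH) x k := by
      have := mem_cfilter.mp (show k ∈ componentSet K TH x from (mem_cfilter.mp hk1).1)
      exact this.2
    have hksg : k ∈ sgSet K TH := eqv_of_mem_of_eqv hx heqv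
    exact (mem_cfilter.mp hk2).2.2.1 ((half_mem_sgSet_iff hkE.1).mp hksg)
  rw [hsplit, Finset.card_union_of_disjoint hdisj2]

theorem sum_chiV_component (W : WGraph) (TH : Finset W.X)
    (hTH : IsEdgeSet W.toPGraph TH) (x : W.X) (hx : x ∈ sgSet W.toPGraph TH) :
    ∑ u ∈ cfilter (fun y => W.toPGraph.IsVertex y) (componentSet W.toPGraph TH x),
        W.chiV u =
      2 - 2 * finsetGenus W (componentSet W.toPGraph TH x) -
      ((cfilter (fun k => W.toPGraph.IsHalf k ∧ k ∉ TH ∧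
        Relation.EqvGen (contrRel W.toPGraph TH) (W.toPGraph.rt k) x)
        Finset.univ).card : ℤ) := by
  obtain ⟨k, hk⟩ := comp_edgeHalf_even W.toPGraph TH hTH x hx
  have hval := sum_valence W.toPGraph TH hTH x hx
  rw [hk] at hval
  unfold WGraph.chiV finsetGenus
  rw [hk]
  have hdiv : 2 * k / 2 = k := by omega
  rw [hdiv]
  rw [Finset.sum_sub_distrib, Finset.sum_sub_distrib, Finset.sum_const, ← Finset.mul_sum]
  have hvalZ : (∑ u ∈ cfilter (fun y => W.toPGraph.IsVertex y)
      (componentSet W.toPGraph TH x), (W.toPGraph.valence u : ℤ)) =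
      2 * (k : ℤ) + ((cfilter (fun k => W.toPGraph.IsHalf k ∧ k ∉ TH ∧
        Relation.EqvGen (contrRel W.toPGraph TH) (W.toPGraph.rt k) x)
        Finset.univ).card : ℤ) := by
    rw [← Nat.cast_sum]
    rw [hval]
    push_cast
    ring
  rw [hvalZ]
  rw [nsmul_eq_mul]
  ring

theorem wcontract_gw_of_not_mem (W : WGraph) (TH : Finset W.X)
    (hTH : IsEdgeSet W.toPGraph TH) {v : W.X} (hv : v ∉ sgSet W.toPGraph TH) :
    (wcontract W TH hTH).gw (Quotient.mk (contrSetoid W.toPGraph TH) v) = W.gw v := by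
  show (if v ∈ sgSet W.toPGraph TH then _ else W.gw v) = W.gw v
  rw [if_neg hv]

theorem wcontract_valence_of_not_mem (W : WGraph) (TH : Finset W.X)
    (hTH : IsEdgeSet W.toPGraph TH) {v : W.X} (hv : v ∉ sgSet W.toPGraph TH) :
    (wcontract W TH hTH).toPGraph.valence (Quotient.mk (contrSetoid W.toPGraph TH) v) =
      W.toPGraph.valence v := by
  show (contract W.toPGraph TH hTH).valence _ = _
  unfold PGraph.valence
  rw [show (contract W.toPGraph TH hTH).tangents (Quotient.mk (contrSetoid W.toPGraph TH) v)
    = _ from contract_tangents_of_not_mem hTH hv]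
  apply Finset.card_image_of_injOn
  apply mk_injOn_of_not_mem
  intro a ha
  rcases mem_cfilter.mp ha with ⟨-, hhalf, hrt⟩
  exact tangent_not_mem_sgSet hv hhalf hrt

theorem wcontract_chiV_of_not_mem (W : WGraph) (TH : Finset W.X)
    (hTH : IsEdgeSet W.toPGraph TH) {v : W.X} (hv : v ∉ sgSet W.toPGraph TH) :
    (wcontract W TH hTH).chiV (Quotient.mk (contrSetoid W.toPGraph TH) v) = W.chiV v := by
  unfold WGraph.chiV
  rw [wcontract_gw_of_not_mem W TH hTH hv, wcontract_valence_of_not_mem W TH hTH hv]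

theorem wcontract_valence_of_mem (W : WGraph) (TH : Finset W.X)
    (hTH : IsEdgeSet W.toPGraph TH) {x : W.X} (hx : x ∈ sgSet W.toPGraph TH) :
    (wcontract W TH hTH).toPGraph.valence (Quotient.mk (contrSetoid W.toPGraph TH) x) =
      (cfilter (fun k => W.toPGraph.IsHalf k ∧ k ∉ TH ∧
        Relation.EqvGen (contrRel W.toPGraph TH) (W.toPGraph.rt k) x)
        Finset.univ).card := by
  show (contract W.toPGraph TH hTH).valence _ = _
  unfold PGraph.valence
  rw [show (contract W.toPGraph TH hTH).tangents (Quotient.mk (contrSetoid W.toPGraph TH) x)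
    = _ from contract_tangents_of_mem hTH hx]
  apply Finset.card_image_of_injOn
  apply mk_injOn_of_not_mem
  intro a ha
  rcases mem_cfilter.mp ha with ⟨-, hhalf, hnot, -⟩
  intro hmem
  exact hnot ((half_mem_sgSet_iff hhalf).mp hmem)

theorem wcontract_chiV_of_mem (W : WGraph) (TH : Finset W.X)
    (hTH : IsEdgeSet W.toPGraph TH) {x : W.X} (hx : x ∈ sgSet W.toPGraph TH) :
    (wcontract W TH hTH).chiV (Quotient.mk (contrSetoid W.toPGraph TH) x) =
      ∑ u ∈ cfilter (fun y => W.toPGraph.IsVertex y) (componentSet W.toPGraph TH x),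
        W.chiV u := by
  rw [sum_chiV_component W TH hTH x hx]
  unfold WGraph.chiV
  rw [wcontract_valence_of_mem W TH hTH hx]
  have hgw : (wcontract W TH hTH).gw (Quotient.mk (contrSetoid W.toPGraph TH) x) =
      (finsetGenus W (componentSet W.toPGraph TH x)).toNat := by
    show (if x ∈ sgSet W.toPGraph TH then _ else _) = _
    rw [if_pos hx]
  rw [hgw]
  rw [Int.toNat_of_nonneg (finsetGenus_nonneg W TH hTH x hx)]

end Chi

section Contraction

theorem cfilter_image {α β : Type*} [DecidableEq β] (f : α → β) (s : Finset α)
    (p : β → Prop) :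
    cfilter p (s.image f) = (cfilter (fun a => p (f a)) s).image f := by
  apply Finset.ext
  intro b
  constructor
  · intro hb
    rcases mem_cfilter.mp hb with ⟨hb1, hb2⟩
    rcases Finset.mem_image.mp hb1 with ⟨a, ha, rfl⟩
    exact Finset.mem_image.mpr ⟨a, mem_cfilter.mpr ⟨ha, hb2⟩, rfl⟩
  · intro hb
    rcases Finset.mem_image.mp hb with ⟨a, ha, rfl⟩
    rcases mem_cfilter.mp ha with ⟨ha1, ha2⟩
    exact mem_cfilter.mpr ⟨Finset.mem_image.mpr ⟨a, ha1, rfl⟩, ha2⟩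

variable {P' P : PGraph} (φ : HarmonicHom P' P)

theorem fiberSum_congr {SH : Finset P.X} {a b : P'.X}
    (hab : Relation.EqvGen (contrRel P' (preimHalves φ SH)) a b) (u : P.X) :
    fiberSum φ SH a u = fiberSum φ SH b u := by
  unfold fiberSum
  congr 1
  apply Finset.ext
  intro u'
  rw [mem_cfilter, mem_cfilter]
  constructor
  · rintro ⟨-, h1, h2, h3⟩
    exact ⟨Finset.mem_univ _, h1, Relation.EqvGen.trans _ _ _ h2 hab, h3⟩
  · rintro ⟨-, h1, h2, h3⟩
    exact ⟨Finset.mem_univ _, h1,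
      Relation.EqvGen.trans _ _ _ h2 (Relation.EqvGen.symm _ _ hab), h3⟩

theorem isolated_of_map_mem (hfin : φ.Finite) {SH : Finset P.X}
    (hSH : IsEdgeSet P SH) {v : P'.X} (hv : v ∉ sgSet P' (preimHalves φ SH))
    (hvv : P'.IsVertex v) (hφv : φ.toFun v ∈ sgSet P SH) :
    P'.tangents v = ∅ ∧ φ.deg v = 0 := by
  obtain ⟨g, hgSH, hgrt⟩ := vertex_mem_sgSet hSH (map_vertex φ hvv) hφv
  have hghalf : P.IsHalf g := (mem_TH_isEdgeHalf hSH hgSH).1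
  have htan : P'.tangents v = ∅ := by
    apply Finset.eq_empty_of_forall_notMem
    intro k hk
    rcases mem_cfilter.mp hk with ⟨-, hkh, hkr⟩
    have hφk : P.IsHalf (φ.toFun k) := map_half φ hfin hkh
    have hφkr : P.rt (φ.toFun k) = φ.toFun v := by rw [← φ.map_rt, hkr]
    have hdegv : 0 < φ.deg v := by
      rw [φ.harmonic v hvv (φ.toFun k) hφk hφkr]
      have hmem : k ∈ cfilter (fun h' => φ.toFun h' = φ.toFun k) (P'.tangents v) :=
        mem_cfilter.mpr ⟨mem_cfilter.mpr ⟨Finset.mem_univ _, hkh, hkr⟩, rfl⟩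
      calc 0 < φ.deg k := hfin k hkh
        _ ≤ _ := Finset.single_le_sum (fun i _ => Nat.zero_le _) hmem
    obtain ⟨k₂, hk₂h, hk₂r, hk₂φ⟩ := exists_tangent_over φ hvv hdegv hghalf hgrt
    have hk₂S : k₂ ∈ preimHalves φ SH := mem_preim_of φ hSH hk₂h (hk₂φ ▸ hgSH)
    apply hv
    rw [← hk₂r]
    exact mem_sgSet_rt P' _ (Finset.mem_union.mpr (Or.inl hk₂S))
  refine ⟨htan, ?_⟩
  rw [φ.harmonic v hvv g hghalf hgrt, htan]
  show (@Finset.filter _ _ (Classical.decPred _) ∅).sum φ.deg = 0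
  rw [Finset.filter_empty, Finset.sum_empty]

variable {Gw' Gw : WGraph} (ψ : HarmonicHom Gw'.toPGraph Gw.toPGraph)

/-- The map on contracted graphs induced by `ψ`. -/
noncomputable def ctoFun (SH : Finset Gw.X) :
    Quotient (contrSetoid Gw'.toPGraph (preimHalves ψ SH)) →
      Quotient (contrSetoid Gw.toPGraph SH) :=
  Quotient.lift (fun x => Quotient.mk (contrSetoid Gw.toPGraph SH) (ψ.toFun x))
    (fun a b hab => mk_eq_mk_iff.mpr (map_eqv ψ hab))

theorem ctoFun_mk (SH : Finset Gw.X) (x : Gw'.X) :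
    ctoFun ψ SH (Quotient.mk (contrSetoid Gw'.toPGraph (preimHalves ψ SH)) x) =
      Quotient.mk (contrSetoid Gw.toPGraph SH) (ψ.toFun x) := rfl

/-- The degree function of the contracted morphism. -/
noncomputable def cdeg (hfin : ψ.Finite) (SH : Finset Gw.X)
    (hSH : IsEdgeSet Gw.toPGraph SH) :
    Quotient (contrSetoid Gw'.toPGraph (preimHalves ψ SH)) → ℕ :=
  Quotient.lift
    (fun x => if x ∈ sgSet Gw'.toPGraph (preimHalves ψ SH) then
        fiberSum ψ SH x (Gw.toPGraph.rt (ψ.toFun x))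
      else ψ.deg x)
    (by
      intro a b hab
      rcases eqv_cases Gw'.toPGraph (preimHalves ψ SH) a b hab with rfl | ⟨ha, hb⟩
      · rfl
      · rw [if_pos ha, if_pos hb, fiberSum_congr ψ hab]
        apply fiberSum_eqv ψ hfin hSH b (Gw.toPGraph.rt_idem _) (Gw.toPGraph.rt_idem _)
        exact rt_respects Gw.toPGraph SH _ _ (map_eqv ψ hab))

theorem cdeg_mk (hfin : ψ.Finite) (SH : Finset Gw.X) (hSH : IsEdgeSet Gw.toPGraph SH)
    (x : Gw'.X) :
    cdeg ψ hfin SH hSH (Quotient.mk (contrSetoid Gw'.toPGraph (preimHalves ψ SH)) x) =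
      if x ∈ sgSet Gw'.toPGraph (preimHalves ψ SH) then
        fiberSum ψ SH x (Gw.toPGraph.rt (ψ.toFun x))
      else ψ.deg x := rfl

theorem cdeg_mk_of_mem (hfin : ψ.Finite) (SH : Finset Gw.X)
    (hSH : IsEdgeSet Gw.toPGraph SH) {x : Gw'.X}
    (hx : x ∈ sgSet Gw'.toPGraph (preimHalves ψ SH)) {u : Gw.X}
    (hu : Gw.toPGraph.IsVertex u)
    (heqv : Relation.EqvGen (contrRel Gw.toPGraph SH) u (ψ.toFun x)) :
    cdeg ψ hfin SH hSH (Quotient.mk (contrSetoid Gw'.toPGraph (preimHalves ψ SH)) x) =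
      fiberSum ψ SH x u := by
  rw [cdeg_mk, if_pos hx]
  apply fiberSum_eqv ψ hfin hSH x (Gw.toPGraph.rt_idem _) hu
  apply Relation.EqvGen.symm
  exact Relation.EqvGen.trans _ _ _ heqv (eqv_rt Gw.toPGraph SH (map_sgSet ψ hx))

/-- The contraction of a finite harmonic morphism along `SH`. -/
noncomputable def contractHom (hfin : ψ.Finite)
    (SH : Finset Gw.X) (hSH : IsEdgeSet Gw.toPGraph SH) :
    HarmonicHom
      (wcontract Gw' (preimHalves ψ SH) (preimHalves_isEdgeSet ψ SH hSH)).toPGraph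
      (wcontract Gw SH hSH).toPGraph where
  toFun := ctoFun ψ SH
  map_rt := by
    intro q
    refine Quotient.inductionOn q (fun a => ?_)
    show Quotient.mk (contrSetoid Gw.toPGraph SH) (ψ.toFun (Gw'.toPGraph.rt a)) =
      Quotient.mk (contrSetoid Gw.toPGraph SH) (Gw.toPGraph.rt (ψ.toFun a))
    rw [ψ.map_rt]
  map_inv := by
    intro q
    refine Quotient.inductionOn q (fun a => ?_)
    show Quotient.mk (contrSetoid Gw.toPGraph SH) (ψ.toFun (Gw'.toPGraph.inv a)) =
      Quotient.mk (contrSetoid Gw.toPGraph SH) (Gw.toPGraph.inv (ψ.toFun a))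
    rw [ψ.map_inv]
  edge_not_leg := by
    intro q
    refine Quotient.inductionOn q (fun k => ?_)
    rintro ⟨hkh, hkinv⟩ ⟨hlh, hlinv⟩
    replace hkh := (contract_isHalf_iff (preimHalves_isEdgeSet ψ SH hSH)).mp hkh
    replace hlh := (contract_isHalf_iff hSH).mp hlh
    have hkE : Gw'.toPGraph.IsEdgeHalf k := by
      refine ⟨hkh.2, fun hc => hkinv ?_⟩
      show Quotient.mk (contrSetoid Gw'.toPGraph (preimHalves ψ SH))
        (Gw'.toPGraph.inv k) = _
      rw [hc]
    have hinv : ψ.toFun k = Gw.toPGraph.inv (ψ.toFun k) :=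
      eq_of_mk_eq hlh.1 (hlinv.symm :
        Quotient.mk (contrSetoid Gw.toPGraph SH) (ψ.toFun k) =
          Quotient.mk (contrSetoid Gw.toPGraph SH) (Gw.toPGraph.inv (ψ.toFun k)))
    exact ψ.edge_not_leg k hkE ⟨hlh.2, hinv.symm⟩
  deg := cdeg ψ hfin SH hSH
  deg_edge := by
    intro q
    refine Quotient.inductionOn q (fun k => ?_)
    rintro ⟨hkh, hkinv⟩
    replace hkh := (contract_isHalf_iff (preimHalves_isEdgeSet ψ SH hSH)).mp hkh
    have hkE : Gw'.toPGraph.IsEdgeHalf k := by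
      refine ⟨hkh.2, fun hc => hkinv ?_⟩
      show Quotient.mk (contrSetoid Gw'.toPGraph (preimHalves ψ SH))
        (Gw'.toPGraph.inv k) = _
      rw [hc]
    have hinvn : Gw'.toPGraph.inv k ∉ sgSet Gw'.toPGraph (preimHalves ψ SH) := by
      intro hc
      apply hkh.1
      have hmem : Gw'.toPGraph.inv k ∈ preimHalves ψ SH :=
        (half_mem_sgSet_iff (isEdgeHalf_inv Gw'.toPGraph hkE).1).mp hc
      have h2 := (preimHalves_isEdgeSet ψ SH hSH _ hmem).2
      rw [Gw'.toPGraph.inv_invol] at h2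
      exact Finset.mem_union.mpr (Or.inl h2)
    show cdeg ψ hfin SH hSH (Quotient.mk (contrSetoid Gw'.toPGraph (preimHalves ψ SH))
      (Gw'.toPGraph.inv k)) = cdeg ψ hfin SH hSH _
    rw [cdeg_mk, cdeg_mk, if_neg hinvn, if_neg hkh.1]
    exact ψ.deg_edge k hkE
  deg_zero_iff := by
    intro q
    refine Quotient.inductionOn q (fun k => ?_)
    intro hkh
    replace hkh := (contract_isHalf_iff (preimHalves_isEdgeSet ψ SH hSH)).mp hkh
    rw [cdeg_mk, if_neg hkh.1]
    have haux : ψ.toFun k ∈ sgSet Gw.toPGraph SH → Gw.toPGraph.IsVertex (ψ.toFun k) := by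
      intro hmem
      by_contra hc
      apply hkh.1
      have hm2 : ψ.toFun k ∈ SH := (half_mem_sgSet_iff hc).mp hmem
      exact Finset.mem_union.mpr (Or.inl (mem_preim_of ψ hSH hkh.2 hm2))
    rw [ψ.deg_zero_iff k hkh.2]
    constructor
    · intro h
      exact (contract_isVertex_iff hSH).mpr (Or.inr h)
    · intro h
      rcases (contract_isVertex_iff hSH).mp h with h1 | h1
      · exact haux h1
      · exact h1
  harmonic := by
    intro qv hqv qh hqh hqrt
    revert hqv hqh hqrt
    refine Quotient.inductionOn₂ qv qh (fun v h => ?_)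
    intro hqv hqh hqrt
    replace hqh := (contract_isHalf_iff hSH).mp hqh
    obtain ⟨hhn, hhh⟩ := hqh
    have hrt : Relation.EqvGen (contrRel Gw.toPGraph SH) (Gw.toPGraph.rt h)
        (ψ.toFun v) := mk_eq_mk_iff.mp hqrt
    show cdeg ψ hfin SH hSH _ = _
    have hnotsg : ∀ k, Gw'.toPGraph.IsHalf k → ψ.toFun k = h →
        k ∉ sgSet Gw'.toPGraph (preimHalves ψ SH) := by
      intro k hk1 hk2 hc
      apply hhn
      rw [← hk2]
      exact Finset.mem_union.mpr
        (Or.inl (mem_cfilter.mp ((half_mem_sgSet_iff hk1).mp hc)).2.2)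
    by_cases hv : v ∈ sgSet Gw'.toPGraph (preimHalves ψ SH)
    · -- contracted vertex
      rw [cdeg_mk_of_mem ψ hfin SH hSH hv (Gw.toPGraph.rt_idem h) hrt]
      rw [fiberSum_rt ψ SH v hhh]
      refine Finset.sum_bij
        (fun k _ => Quotient.mk (contrSetoid Gw'.toPGraph (preimHalves ψ SH)) k)
        ?_ ?_ ?_ ?_
      · intro k hk
        rcases mem_cfilter.mp hk with ⟨-, h1, h2, h3⟩
        have hknot : k ∉ preimHalves ψ SH := fun hc =>
          hnotsg k h1 h2 (Finset.mem_union.mpr (Or.inl hc))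
        refine mem_cfilter.mpr ⟨?_, ?_⟩
        · show Quotient.mk (contrSetoid Gw'.toPGraph (preimHalves ψ SH)) k ∈
            (contract Gw'.toPGraph (preimHalves ψ SH)
              (preimHalves_isEdgeSet ψ SH hSH)).tangents
              (Quotient.mk (contrSetoid Gw'.toPGraph (preimHalves ψ SH)) v)
          rw [contract_tangents_of_mem (preimHalves_isEdgeSet ψ SH hSH) hv]
          exact Finset.mem_image.mpr
            ⟨k, mem_cfilter.mpr ⟨Finset.mem_univ _, h1, hknot, h3⟩, rfl⟩
        · show Quotient.mk (contrSetoid Gw.toPGraph SH) (ψ.toFun k) = _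
          rw [h2]
      · intro a ha b hb hab
        rcases mem_cfilter.mp ha with ⟨-, ha1, ha2, -⟩
        exact eq_of_mk_eq (hnotsg a ha1 ha2) hab
      · intro q hq
        rcases mem_cfilter.mp hq with ⟨hq1, hq2⟩
        have hq1' : q ∈ (cfilter (fun k => Gw'.toPGraph.IsHalf k ∧
            k ∉ preimHalves ψ SH ∧ Relation.EqvGen
              (contrRel Gw'.toPGraph (preimHalves ψ SH)) (Gw'.toPGraph.rt k) v)
            Finset.univ).image (Quotient.mk (contrSetoid Gw'.toPGraph (preimHalves ψ SH))) := by
          rw [← contract_tangents_of_mem (preimHalves_isEdgeSet ψ SH hSH) hv]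
          exact hq1
        rcases Finset.mem_image.mp hq1' with ⟨k, hkB, rfl⟩
        rcases mem_cfilter.mp hkB with ⟨-, hB1, hB2, hB3⟩
        have hψk : ψ.toFun k = h := (eq_of_mk_eq hhn ((hq2 :
          Quotient.mk (contrSetoid Gw.toPGraph SH) (ψ.toFun k) =
            Quotient.mk (contrSetoid Gw.toPGraph SH) h).symm)).symm
        exact ⟨k, mem_cfilter.mpr ⟨Finset.mem_univ _, hB1, hψk, hB3⟩, rfl⟩
      · intro k hk
        rcases mem_cfilter.mp hk with ⟨-, h1, h2, -⟩
        show ψ.deg k = cdeg ψ hfin SH hSH _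
        rw [cdeg_mk]
        exact (if_neg (hnotsg k h1 h2)).symm
    · -- uncontracted vertex
      have hvv : Gw'.toPGraph.IsVertex v := by
        rcases (contract_isVertex_iff (preimHalves_isEdgeSet ψ SH hSH)).mp hqv with
          h1 | h1
        · exact absurd h1 hv
        · exact h1
      by_cases hφv : ψ.toFun v ∈ sgSet Gw.toPGraph SH
      · obtain ⟨htan, hdeg0⟩ := isolated_of_map_mem ψ hfin hSH hv hvv hφv
        rw [cdeg_mk, if_neg hv, hdeg0]
        rw [show (wcontract Gw' (preimHalves ψ SH)
            (preimHalves_isEdgeSet ψ SH hSH)).toPGraph.tangents =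
          (contract Gw'.toPGraph (preimHalves ψ SH)
            (preimHalves_isEdgeSet ψ SH hSH)).tangents from rfl]
        rw [contract_tangents_of_not_mem (preimHalves_isEdgeSet ψ SH hSH) hv, htan,
          Finset.image_empty]
        show 0 = (@Finset.filter _ _ (Classical.decPred _) ∅).sum _
        rw [Finset.filter_empty]
        exact Finset.sum_empty.symm
      · have hrteq : Gw.toPGraph.rt h = ψ.toFun v := by
          rcases eqv_cases Gw.toPGraph SH _ _ hrt with h1 | h1
          · exact h1
          · exact absurd h1.2 hφv
        rw [cdeg_mk, if_neg hv, ψ.harmonic v hvv h hhh hrteq]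
        refine Finset.sum_bij
          (fun k _ => Quotient.mk (contrSetoid Gw'.toPGraph (preimHalves ψ SH)) k)
          ?_ ?_ ?_ ?_
        · intro k hk
          rcases mem_cfilter.mp hk with ⟨hk1, hk2⟩
          refine mem_cfilter.mpr ⟨?_, ?_⟩
          · show Quotient.mk (contrSetoid Gw'.toPGraph (preimHalves ψ SH)) k ∈
              (contract Gw'.toPGraph (preimHalves ψ SH)
                (preimHalves_isEdgeSet ψ SH hSH)).tangents
                (Quotient.mk (contrSetoid Gw'.toPGraph (preimHalves ψ SH)) v)
            rw [contract_tangents_of_not_mem (preimHalves_isEdgeSet ψ SH hSH) hv]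
            exact Finset.mem_image.mpr ⟨k, hk1, rfl⟩
          · show Quotient.mk (contrSetoid Gw.toPGraph SH) (ψ.toFun k) = _
            rw [hk2]
        · intro a ha b hb hab
          rcases mem_cfilter.mp ha with ⟨ha1, -⟩
          rcases mem_cfilter.mp ha1 with ⟨-, ha2, ha3⟩
          exact eq_of_mk_eq (tangent_not_mem_sgSet hv ha2 ha3) hab
        · intro q hq
          rcases mem_cfilter.mp hq with ⟨hq1, hq2⟩
          have hq1' : q ∈ (Gw'.toPGraph.tangents v).image
              (Quotient.mk (contrSetoid Gw'.toPGraph (preimHalves ψ SH))) := by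
            rw [← contract_tangents_of_not_mem (preimHalves_isEdgeSet ψ SH hSH) hv]
            exact hq1
          rcases Finset.mem_image.mp hq1' with ⟨k, hkT, rfl⟩
          have hψk : ψ.toFun k = h := (eq_of_mk_eq hhn ((hq2 :
            Quotient.mk (contrSetoid Gw.toPGraph SH) (ψ.toFun k) =
              Quotient.mk (contrSetoid Gw.toPGraph SH) h).symm)).symm
          exact ⟨k, mem_cfilter.mpr ⟨hkT, hψk⟩, rfl⟩
        · intro k hk
          rcases mem_cfilter.mp hk with ⟨hk1, -⟩
          rcases mem_cfilter.mp hk1 with ⟨-, hk2, hk3⟩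
          show ψ.deg k = cdeg ψ hfin SH hSH _
          rw [cdeg_mk]
          exact (if_neg (tangent_not_mem_sgSet hv hk2 hk3)).symm

end Contraction

section Final

variable {Gw' Gw : WGraph} (ψ : HarmonicHom Gw'.toPGraph Gw.toPGraph)

theorem contractHom_finite (hfin : ψ.Finite) (SH : Finset Gw.X)
    (hSH : IsEdgeSet Gw.toPGraph SH) : (contractHom ψ hfin SH hSH).Finite := by
  intro q hq
  revert hq
  refine Quotient.inductionOn q (fun k => ?_)
  intro hq
  replace hq := (contract_isHalf_iff (preimHalves_isEdgeSet ψ SH hSH)).mp hq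
  have hdegeq : (contractHom ψ hfin SH hSH).deg = cdeg ψ hfin SH hSH := rfl
  rw [hdegeq, cdeg_mk, if_neg hq.1]
  exact hfin k hq.2

theorem contractHom_isContraction (hfin : ψ.Finite) (SH : Finset Gw.X)
    (hSH : IsEdgeSet Gw.toPGraph SH) :
    IsContractionHom ψ SH hSH (preimHalves ψ SH) (preimHalves_isEdgeSet ψ SH hSH)
      (contractHom ψ hfin SH hSH) := by
  have hdegeq : (contractHom ψ hfin SH hSH).deg = cdeg ψ hfin SH hSH := rfl
  refine ⟨fun x => rfl, fun x hx => ?_, fun x hx u hu hr => ?_⟩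
  · rw [hdegeq, cdeg_mk, if_neg hx]
  · rw [hdegeq, cdeg_mk_of_mem ψ hfin SH hSH hx hu hr]
    rfl

theorem contractHom_unramified (hfin : ψ.Finite) (hunram : Unramified ψ)
    (SH : Finset Gw.X) (hSH : IsEdgeSet Gw.toPGraph SH) :
    Unramified (contractHom ψ hfin SH hSH) := by
  intro q hq
  revert hq
  refine Quotient.inductionOn q (fun v => ?_)
  intro hq
  have hdegeq : (contractHom ψ hfin SH hSH).deg = cdeg ψ hfin SH hSH := rfl
  have htofun : (contractHom ψ hfin SH hSH).toFun = ctoFun ψ SH := rfl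
  unfold ram
  rw [hdegeq, htofun, ctoFun_mk]
  by_cases hv : v ∈ sgSet Gw'.toPGraph (preimHalves ψ SH)
  · -- contracted vertex
    have hφv : ψ.toFun v ∈ sgSet Gw.toPGraph SH := map_sgSet ψ hv
    rw [wcontract_chiV_of_mem Gw SH hSH hφv,
      wcontract_chiV_of_mem Gw' (preimHalves ψ SH) (preimHalves_isEdgeSet ψ SH hSH) hv,
      cdeg_mk, if_pos hv]
    set D := fiberSum ψ SH v (Gw.toPGraph.rt (ψ.toFun v)) with hD
    have key : ∑ u' ∈ cfilter (fun y => Gw'.toPGraph.IsVertex y)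
        (componentSet Gw'.toPGraph (preimHalves ψ SH) v), Gw'.chiV u' =
        (D : ℤ) * ∑ u ∈ cfilter (fun y => Gw.toPGraph.IsVertex y)
          (componentSet Gw.toPGraph SH (ψ.toFun v)), Gw.chiV u := by
      classical
      have hmaps : ∀ u' ∈ cfilter (fun y => Gw'.toPGraph.IsVertex y)
          (componentSet Gw'.toPGraph (preimHalves ψ SH) v), ψ.toFun u' ∈
          cfilter (fun y => Gw.toPGraph.IsVertex y)
            (componentSet Gw.toPGraph SH (ψ.toFun v)) := by
        intro u' hu'
        rcases mem_cfilter.mp hu' with ⟨hu1, hu2⟩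
        have heqv : Relation.EqvGen (contrRel Gw'.toPGraph (preimHalves ψ SH)) v u' := by
          have := mem_cfilter.mp (show u' ∈ componentSet Gw'.toPGraph
            (preimHalves ψ SH) v from hu1)
          exact this.2
        refine mem_cfilter.mpr ⟨?_, map_vertex ψ hu2⟩
        unfold componentSet
        rw [mem_cfilter]
        exact ⟨Finset.mem_univ _, map_eqv ψ heqv⟩
      have step1 : ∑ u' ∈ cfilter (fun y => Gw'.toPGraph.IsVertex y)
          (componentSet Gw'.toPGraph (preimHalves ψ SH) v), Gw'.chiV u' =
          ∑ u' ∈ cfilter (fun y => Gw'.toPGraph.IsVertex y)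
            (componentSet Gw'.toPGraph (preimHalves ψ SH) v),
            (ψ.deg u' : ℤ) * Gw.chiV (ψ.toFun u') := by
        apply Finset.sum_congr rfl
        intro u' hu'
        have hvert : Gw'.toPGraph.IsVertex u' := (mem_cfilter.mp hu').2
        have h0 := hunram u' hvert
        unfold ram at h0
        linarith
      rw [step1]
      rw [← Finset.sum_fiberwise_of_maps_to hmaps
        (fun u' => (ψ.deg u' : ℤ) * Gw.chiV (ψ.toFun u'))]
      rw [Finset.mul_sum]
      apply Finset.sum_congr rfl
      intro u hu
      rcases mem_cfilter.mp hu with ⟨huC, huV⟩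
      have huEqv : Relation.EqvGen (contrRel Gw.toPGraph SH) (ψ.toFun v) u := by
        have := mem_cfilter.mp (show u ∈ componentSet Gw.toPGraph SH (ψ.toFun v)
          from huC)
        exact this.2
      have e2 : ∑ u' ∈ (cfilter (fun y => Gw'.toPGraph.IsVertex y)
          (componentSet Gw'.toPGraph (preimHalves ψ SH) v)).filter
            (fun u' => ψ.toFun u' = u), (ψ.deg u' : ℤ) * Gw.chiV (ψ.toFun u') =
          (∑ u' ∈ (cfilter (fun y => Gw'.toPGraph.IsVertex y)
            (componentSet Gw'.toPGraph (preimHalves ψ SH) v)).filter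
              (fun u' => ψ.toFun u' = u), (ψ.deg u' : ℤ)) * Gw.chiV u := by
        rw [Finset.sum_mul]
        apply Finset.sum_congr rfl
        intro u' hu'
        rw [(Finset.mem_filter.mp hu').2]
      rw [e2]
      have e3 : (cfilter (fun y => Gw'.toPGraph.IsVertex y)
          (componentSet Gw'.toPGraph (preimHalves ψ SH) v)).filter
            (fun u' => ψ.toFun u' = u) =
          cfilter (fun u' => Gw'.toPGraph.IsVertex u' ∧
            Relation.EqvGen (contrRel Gw'.toPGraph (preimHalves ψ SH)) u' v ∧
            ψ.toFun u' = u) Finset.univ := by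
        apply Finset.ext
        intro u'
        rw [Finset.mem_filter]
        constructor
        · rintro ⟨hu1, hu2⟩
          rcases mem_cfilter.mp hu1 with ⟨hu3, hu4⟩
          have heqv := (mem_cfilter.mp (show u' ∈ componentSet Gw'.toPGraph
            (preimHalves ψ SH) v from hu3)).2
          exact mem_cfilter.mpr ⟨Finset.mem_univ _, hu4,
            Relation.EqvGen.symm _ _ heqv, hu2⟩
        · intro hu'
          rcases mem_cfilter.mp hu' with ⟨-, hu1, hu2, hu3⟩
          refine ⟨mem_cfilter.mpr ⟨?_, hu1⟩, hu3⟩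
          unfold componentSet
          rw [mem_cfilter]
          exact ⟨Finset.mem_univ _, Relation.EqvGen.symm _ _ hu2⟩
      have e4 : ∑ u' ∈ (cfilter (fun y => Gw'.toPGraph.IsVertex y)
          (componentSet Gw'.toPGraph (preimHalves ψ SH) v)).filter
            (fun u' => ψ.toFun u' = u), (ψ.deg u' : ℤ) = (D : ℤ) := by
        rw [← Nat.cast_sum]
        congr 1
        rw [show ((cfilter (fun y => Gw'.toPGraph.IsVertex y)
            (componentSet Gw'.toPGraph (preimHalves ψ SH) v)).filter
              (fun u' => ψ.toFun u' = u)).sum ψ.deg = fiberSum ψ SH v u from by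
          unfold fiberSum; rw [e3]]
        rw [hD]
        apply fiberSum_eqv ψ hfin hSH v huV (Gw.toPGraph.rt_idem _)
        exact Relation.EqvGen.trans _ _ _ (Relation.EqvGen.symm _ _ huEqv)
          (eqv_rt Gw.toPGraph SH hφv)
      rw [e4]
    rw [key]
    ring
  · -- uncontracted vertex
    have hvv : Gw'.toPGraph.IsVertex v := by
      rcases (contract_isVertex_iff (preimHalves_isEdgeSet ψ SH hSH)).mp hq with
        h1 | h1
      · exact absurd h1 hv
      · exact h1
    rw [cdeg_mk, if_neg hv,
      wcontract_chiV_of_not_mem Gw' (preimHalves ψ SH)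
        (preimHalves_isEdgeSet ψ SH hSH) hv]
    by_cases hφv : ψ.toFun v ∈ sgSet Gw.toPGraph SH
    · obtain ⟨-, hdeg0⟩ := isolated_of_map_mem ψ hfin hSH hv hvv hφv
      have h0 := hunram v hvv
      unfold ram at h0
      rw [hdeg0] at h0 ⊢
      push_cast at h0 ⊢
      linarith
    · rw [wcontract_chiV_of_not_mem Gw SH hSH hφv]
      have h0 := hunram v hvv
      unfold ram at h0
      exact h0

end Final

/-- Let `φ : (G',g') → (G,g)` be an unramified finite harmonic morphism of
weighted graphs and `S ⊆ E(G)` (encoded by the inv-closed set `SH` of half-edges), with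
`S' = φ⁻¹(S)`.  Then: (a) every connected component `F'` of `[S']` maps onto the component
`F` of `[S]` containing its image, and `Σ { d_φ(u') : u' ∈ V(F'), φ(u') = u }` is
independent of the choice of vertex `u ∈ V(F)`; (b) the contraction
`φ_S : G'/S' → G/S` is again an unramified finite harmonic morphism of weighted graphs. -/
theorem contraction_of_unramified_harmonic
    (G' G : WGraph) (φ : HarmonicHom G'.toPGraph G.toPGraph)
    (hfin : φ.Finite) (hunram : Unramified φ)
    (SH : Finset G.X) (hSH : IsEdgeSet G.toPGraph SH) :
    -- part (a): components of [S'] map onto components of [S] ...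
    ((∀ x ∈ sgSet G'.toPGraph (preimHalves φ SH), φ.toFun x ∈ sgSet G.toPGraph SH) ∧
     (∀ x ∈ sgSet G'.toPGraph (preimHalves φ SH), ∀ y ∈ sgSet G.toPGraph SH,
        (contrSetoid G.toPGraph SH).r (φ.toFun x) y →
        ∃ x', x' ∈ sgSet G'.toPGraph (preimHalves φ SH) ∧
          (contrSetoid G'.toPGraph (preimHalves φ SH)).r x x' ∧ φ.toFun x' = y) ∧
     -- ... and the vertex fiber sums over a component are independent of the base vertex
     (∀ x ∈ sgSet G'.toPGraph (preimHalves φ SH), ∀ u₁ u₂ : G.X,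
        G.toPGraph.IsVertex u₁ → (contrSetoid G.toPGraph SH).r u₁ (φ.toFun x) →
        G.toPGraph.IsVertex u₂ → (contrSetoid G.toPGraph SH).r u₂ (φ.toFun x) →
        (∑ u' ∈ cfilter (fun u' => G'.toPGraph.IsVertex u' ∧
            (contrSetoid G'.toPGraph (preimHalves φ SH)).r u' x ∧ φ.toFun u' = u₁)
            Finset.univ, φ.deg u') =
        (∑ u' ∈ cfilter (fun u' => G'.toPGraph.IsVertex u' ∧
            (contrSetoid G'.toPGraph (preimHalves φ SH)).r u' x ∧ φ.toFun u' = u₂)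
            Finset.univ, φ.deg u'))) ∧
    -- part (b): the contracted morphism exists and is unramified, finite and harmonic
    (∃ ψS : HarmonicHom
        (wcontract G' (preimHalves φ SH) (preimHalves_isEdgeSet φ SH hSH)).toPGraph
        (wcontract G SH hSH).toPGraph,
      IsContractionHom φ SH hSH (preimHalves φ SH) (preimHalves_isEdgeSet φ SH hSH) ψS ∧
      ψS.Finite ∧ Unramified ψS) := by
  constructor
  · refine ⟨fun x hx => map_sgSet φ hx, fun x hx y hy hr => ?_, ?_⟩
    · exact (lift_eqv φ hfin hSH (φ.toFun x) y hr).1 x hx rfl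
    · intro x hx u₁ u₂ h1 hr1 h2 hr2
      have e1 : Relation.EqvGen (contrRel G.toPGraph SH) u₁ u₂ :=
        Relation.EqvGen.trans _ _ _ hr1 (Relation.EqvGen.symm _ _ hr2)
      exact fiberSum_eqv φ hfin hSH x h1 h2 e1
  · exact ⟨contractHom φ hfin SH hSH, contractHom_isContraction φ hfin SH hSH,
      contractHom_finite φ hfin SH hSH, contractHom_unramified φ hfin hunram SH hSH⟩

end TropDR
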